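/- For every a ≥ 0, lim_{b→a} R_b = R_a; that is, the map a ↦ R_a from [0,∞) to (0,∞] is continuous (with the topology of the extended reals on the target). -/

import Mathlib

open MeasureTheory Real Filter Set
open scoped ENNReal Topology

noncomputable section

/-- The interval [0, R) for an extended-real radius `R`. -/
def odeDom (R : ℝ≥0∞) : Set ℝ := {r : ℝ | 0 ≤ r ∧ ENNReal.ofReal r < R}

/-- `u` is a solution with initial value `a` on `[0, R)` of
u'' + ((m-1)/r) u' = φ(u), u(0) = a, u'(0) = 0, with `u` nonnegative and C². -/
def IsSolOn (m : ℝ) (φ : ℝ → ℝ) (a : ℝ) (R : ℝ≥0∞) (u : ℝ → ℝ) : Prop :=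
  ContDiffOn ℝ 2 u (odeDom R) ∧
  (∀ r ∈ odeDom R, 0 ≤ u r) ∧
  u 0 = a ∧
  derivWithin u (Set.Ici 0) 0 = 0 ∧
  ∀ r : ℝ, 0 < r → ENNReal.ofReal r < R →
    deriv (deriv u) r + ((m - 1) / r) * deriv u r = φ (u r)

/-- The maximal existence radius `R_a`: the supremum of all `R ∈ (0, ∞]` such that a solution
with initial value `a` exists on `[0, R)`. -/
def maxRadius (m : ℝ) (φ : ℝ → ℝ) (a : ℝ) : ℝ≥0∞ :=
  sSup {R : ℝ≥0∞ | 0 < R ∧ ∃ u : ℝ → ℝ, IsSolOn m φ a R u}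

/-- Bundle of hypotheses on `m` and `φ`. -/
structure PhiOK (m : ℝ) (φ : ℝ → ℝ) : Prop where
  hm : 2 < m
  h0 : φ 0 = 0
  mono : MonotoneOn φ (Set.Ici 0)
  nonneg : ∀ t : ℝ, 0 ≤ t → 0 ≤ φ t
  lip : ∀ x ∈ Set.Ici (0 : ℝ), ∃ K : NNReal, ∃ s ∈ nhdsWithin x (Set.Ici 0),
      LipschitzOnWith K φ s

namespace PhiOK

variable {m : ℝ} {φ : ℝ → ℝ}

lemma hm1 (h : PhiOK m φ) : (0:ℝ) < m - 1 := by linarith [h.hm]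
lemma hm0 (h : PhiOK m φ) : (0:ℝ) < m := by linarith [h.hm]
lemma h1m (h : PhiOK m φ) : (1:ℝ) - m ≠ 0 := by linarith [h.hm]

lemma contOn (h : PhiOK m φ) : ContinuousOn φ (Set.Ici 0) := by
  intro x hx
  obtain ⟨K, s, hs, hK⟩ := h.lip x hx
  exact (hK.continuousOn.continuousWithinAt (mem_of_mem_nhdsWithin hx hs)).mono_of_mem_nhdsWithin hs

end PhiOK

/-- The inner integral `∫₀^s t^(m-1) φ(v t) dt`. -/
def Pint (m : ℝ) (φ : ℝ → ℝ) (v : ℝ → ℝ) (s : ℝ) : ℝ :=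
  ∫ t in (0:ℝ)..s, t ^ (m-1) * φ (v t)

/-- `H v s = s^(1-m) ∫₀^s t^(m-1) φ(v t) dt`, the derivative of the solution candidate. -/
def Ph (m : ℝ) (φ : ℝ → ℝ) (v : ℝ → ℝ) (s : ℝ) : ℝ :=
  s ^ (1-m) * Pint m φ v s

/-- The fixed point operator `T b v (r) = b + ∫₀^r H v`. -/
def PT (m : ℝ) (φ : ℝ → ℝ) (b : ℝ) (v : ℝ → ℝ) (r : ℝ) : ℝ :=
  b + ∫ s in (0:ℝ)..r, Ph m φ v s

section Ablock

variable {m : ℝ} {φ : ℝ → ℝ} {v v' : ℝ → ℝ} {r0 M b : ℝ}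

lemma cont_rpow_exp (hm1 : (0:ℝ) < m - 1) : Continuous (fun t : ℝ => t ^ (m-1)) := by
  apply continuous_iff_continuousAt.2
  intro x
  exact Real.continuousAt_rpow_const x (m-1) (Or.inr hm1.le)

lemma integrand_contOn (h : PhiOK m φ) (hv : ContinuousOn v (Icc 0 r0))
    (hv0 : ∀ t ∈ Icc 0 r0, 0 ≤ v t) :
    ContinuousOn (fun t => t ^ (m-1) * φ (v t)) (Icc 0 r0) :=
  ((cont_rpow_exp h.hm1).continuousOn).mul (h.contOn.comp hv (fun t ht => hv0 t ht))

lemma integrand_nonneg (h : PhiOK m φ) (hv0 : ∀ t ∈ Icc 0 r0, 0 ≤ v t) :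
    ∀ t ∈ Icc 0 r0, 0 ≤ t ^ (m-1) * φ (v t) := fun t ht =>
  mul_nonneg (Real.rpow_nonneg ht.1 _) (h.nonneg _ (hv0 t ht))

lemma integral_rpow_exp (h : PhiOK m φ) {s : ℝ} (hs : 0 ≤ s) :
    ∫ t in (0:ℝ)..s, t ^ (m-1) = s ^ m / m := by
  rw [integral_rpow (Or.inl (by linarith [h.hm]))]
  rw [show m - 1 + 1 = m by ring, Real.zero_rpow (ne_of_gt h.hm0)]
  ring

lemma Pint_nonneg (h : PhiOK m φ) (hv0 : ∀ t ∈ Icc 0 r0, 0 ≤ v t) {s : ℝ}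
    (hs : s ∈ Icc 0 r0) : 0 ≤ Pint m φ v s := by
  apply intervalIntegral.integral_nonneg hs.1
  intro t ht
  exact integrand_nonneg h hv0 t ⟨ht.1, le_trans ht.2 hs.2⟩

lemma Pint_le (h : PhiOK m φ) (hv : ContinuousOn v (Icc 0 r0))
    (hv0 : ∀ t ∈ Icc 0 r0, 0 ≤ v t) (hM0 : 0 ≤ M) (hM : ∀ t ∈ Icc 0 r0, v t ≤ M)
    {s : ℝ} (hs : s ∈ Icc 0 r0) : Pint m φ v s ≤ φ M * (s ^ m / m) := by
  have hsub : Icc (0:ℝ) s ⊆ Icc 0 r0 := Icc_subset_Icc le_rfl hs.2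
  have h1 : Pint m φ v s ≤ ∫ t in (0:ℝ)..s, t ^ (m-1) * φ M := by
    apply intervalIntegral.integral_mono_on hs.1
    · exact ((integrand_contOn h hv hv0).mono hsub).intervalIntegrable_of_Icc hs.1
    · exact (((cont_rpow_exp h.hm1).mul continuous_const).continuousOn).intervalIntegrable_of_Icc hs.1
    · intro t ht
      have htm : t ∈ Icc 0 r0 := hsub ht
      exact mul_le_mul_of_nonneg_left
        (h.mono (hv0 t htm) hM0 (hM t htm)) (Real.rpow_nonneg ht.1 _)
  calc Pint m φ v s ≤ ∫ t in (0:ℝ)..s, t ^ (m-1) * φ M := h1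
    _ = (∫ t in (0:ℝ)..s, t ^ (m-1)) * φ M := intervalIntegral.integral_mul_const _ _
    _ = φ M * (s ^ m / m) := by rw [integral_rpow_exp h hs.1]; ring

lemma Ph_zero (h : PhiOK m φ) : Ph m φ v 0 = 0 := by
  unfold Ph
  rw [Real.zero_rpow h.h1m, zero_mul]

lemma Ph_nonneg (h : PhiOK m φ) (hv0 : ∀ t ∈ Icc 0 r0, 0 ≤ v t) {s : ℝ}
    (hs : s ∈ Icc 0 r0) : 0 ≤ Ph m φ v s :=
  mul_nonneg (Real.rpow_nonneg hs.1 _) (Pint_nonneg h hv0 hs)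

lemma Ph_le (h : PhiOK m φ) (hv : ContinuousOn v (Icc 0 r0))
    (hv0 : ∀ t ∈ Icc 0 r0, 0 ≤ v t) (hM0 : 0 ≤ M) (hM : ∀ t ∈ Icc 0 r0, v t ≤ M)
    {s : ℝ} (hs : s ∈ Icc 0 r0) : Ph m φ v s ≤ φ M / m * s := by
  rcases eq_or_lt_of_le hs.1 with h0 | h0
  · rw [← h0, Ph_zero h]
    simp
  · have h1 : Ph m φ v s ≤ s ^ (1-m) * (φ M * (s ^ m / m)) :=
      mul_le_mul_of_nonneg_left (Pint_le h hv hv0 hM0 hM hs) (Real.rpow_nonneg hs.1 _)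
    have h2 : s ^ (1-m) * s ^ m = s := by
      rw [← Real.rpow_add h0, show 1 - m + m = 1 by ring, Real.rpow_one]
    calc Ph m φ v s ≤ s ^ (1-m) * (φ M * (s ^ m / m)) := h1
      _ = (s ^ (1-m) * s ^ m) * φ M / m := by ring
      _ = φ M / m * s := by rw [h2]; ring

lemma Ph_ge (h : PhiOK m φ) (hv : ContinuousOn v (Icc 0 r0))
    (hv0 : ∀ t ∈ Icc 0 r0, 0 ≤ v t) (hb : 0 ≤ b) (hvb : ∀ t ∈ Icc 0 r0, b ≤ v t)
    {s : ℝ} (hs : s ∈ Icc 0 r0) : φ b / m * s ≤ Ph m φ v s := by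
  rcases eq_or_lt_of_le hs.1 with h0 | h0
  · rw [← h0, Ph_zero h]
    simp
  · have hsub : Icc (0:ℝ) s ⊆ Icc 0 r0 := Icc_subset_Icc le_rfl hs.2
    have h1 : (∫ t in (0:ℝ)..s, t ^ (m-1) * φ b) ≤ Pint m φ v s := by
      apply intervalIntegral.integral_mono_on hs.1
      · exact (((cont_rpow_exp h.hm1).mul continuous_const).continuousOn).intervalIntegrable_of_Icc hs.1
      · exact ((integrand_contOn h hv hv0).mono hsub).intervalIntegrable_of_Icc hs.1
      · intro t ht
        have htm : t ∈ Icc 0 r0 := hsub ht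
        exact mul_le_mul_of_nonneg_left
          (h.mono hb (hv0 t htm) (hvb t htm)) (Real.rpow_nonneg ht.1 _)
    have h2 : (∫ t in (0:ℝ)..s, t ^ (m-1) * φ b) = φ b * (s ^ m / m) := by
      rw [intervalIntegral.integral_mul_const, integral_rpow_exp h hs.1]; ring
    have h3 : s ^ (1-m) * (φ b * (s ^ m / m)) ≤ Ph m φ v s := by
      apply mul_le_mul_of_nonneg_left _ (Real.rpow_nonneg hs.1 _)
      rw [← h2]; exact h1
    have h4 : s ^ (1-m) * s ^ m = s := by
      rw [← Real.rpow_add h0, show 1 - m + m = 1 by ring, Real.rpow_one]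
    calc φ b / m * s = (s ^ (1-m) * s ^ m) * φ b / m := by rw [h4]; ring
      _ = s ^ (1-m) * (φ b * (s ^ m / m)) := by ring
      _ ≤ Ph m φ v s := h3

end Ablock

section Bblock

variable {m : ℝ} {φ : ℝ → ℝ} {v v' : ℝ → ℝ} {r0 M b : ℝ}

lemma Pint_contOn (h : PhiOK m φ) (hr0 : 0 ≤ r0) (hv : ContinuousOn v (Icc 0 r0))
    (hv0 : ∀ t ∈ Icc 0 r0, 0 ≤ v t) : ContinuousOn (Pint m φ v) (Icc 0 r0) := by
  have := intervalIntegral.continuousOn_primitive_interval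
    (f := fun t => t ^ (m-1) * φ (v t)) (μ := volume) (a := (0:ℝ)) (b := r0)
    (by rw [uIcc_of_le hr0]; exact (integrand_contOn h hv hv0).integrableOn_compact isCompact_Icc)
  rwa [uIcc_of_le hr0] at this

lemma Ph_contOn (h : PhiOK m φ) (hr0 : 0 ≤ r0) (hv : ContinuousOn v (Icc 0 r0))
    (hv0 : ∀ t ∈ Icc 0 r0, 0 ≤ v t) (hM0 : 0 ≤ M) (hM : ∀ t ∈ Icc 0 r0, v t ≤ M) :
    ContinuousOn (Ph m φ v) (Icc 0 r0) := by
  intro s hs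
  rcases eq_or_lt_of_le hs.1 with h0 | h0
  · -- continuity at 0 via squeeze
    have hPh0 : Ph m φ v 0 = 0 := Ph_zero h
    rw [← h0, ContinuousWithinAt, hPh0]
    have hb : ∀ᶠ t in 𝓝[Icc 0 r0] (0:ℝ), ‖Ph m φ v t‖ ≤ φ M / m * t := by
      filter_upwards [self_mem_nhdsWithin] with t ht
      rw [Real.norm_eq_abs, abs_of_nonneg (Ph_nonneg h hv0 ht)]
      exact Ph_le h hv hv0 hM0 hM ht
    have hg : Tendsto (fun t : ℝ => φ M / m * t) (𝓝[Icc 0 r0] (0:ℝ)) (𝓝 0) := by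
      have : Tendsto (fun t : ℝ => φ M / m * t) (𝓝 (0:ℝ)) (𝓝 (φ M / m * 0)) :=
        (continuous_const.mul continuous_id).tendsto 0
      rw [mul_zero] at this
      exact this.mono_left nhdsWithin_le_nhds
    exact squeeze_zero_norm' hb hg
  · apply ContinuousWithinAt.mul
    · exact (Real.continuousAt_rpow_const s (1-m) (Or.inl (ne_of_gt h0))).continuousWithinAt
    · exact Pint_contOn h hr0 hv hv0 s hs

lemma Pint_hasDerivAt (h : PhiOK m φ) (hr0 : 0 ≤ r0) (hv : ContinuousOn v (Icc 0 r0))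
    (hv0 : ∀ t ∈ Icc 0 r0, 0 ≤ v t) {s : ℝ} (hs : s ∈ Ioo 0 r0) :
    HasDerivAt (Pint m φ v) (s ^ (m-1) * φ (v s)) s := by
  have hco : ContinuousOn (fun t => t ^ (m-1) * φ (v t)) (Ioo 0 r0) :=
    (integrand_contOn h hv hv0).mono Ioo_subset_Icc_self
  apply intervalIntegral.integral_hasDerivAt_right
  · exact ((integrand_contOn h hv hv0).mono
      (Icc_subset_Icc le_rfl hs.2.le)).intervalIntegrable_of_Icc hs.1.le
  · exact hco.stronglyMeasurableAtFilter isOpen_Ioo s hs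
  · exact hco.continuousAt (isOpen_Ioo.mem_nhds hs)

lemma Ph_hasDerivAt (h : PhiOK m φ) (hr0 : 0 ≤ r0) (hv : ContinuousOn v (Icc 0 r0))
    (hv0 : ∀ t ∈ Icc 0 r0, 0 ≤ v t) {s : ℝ} (hs : s ∈ Ioo 0 r0) :
    HasDerivAt (Ph m φ v) (φ (v s) - (m-1) / s * Ph m φ v s) s := by
  have h1 : HasDerivAt (fun t : ℝ => t ^ (1-m)) ((1-m) * s ^ (1-m-1)) s :=
    Real.hasDerivAt_rpow_const (Or.inl (ne_of_gt hs.1))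
  have h2 := (h1.mul (Pint_hasDerivAt h hr0 hv hv0 hs))
  have heq : (1-m) * s ^ (1-m-1) * Pint m φ v s + s ^ (1-m) * (s ^ (m-1) * φ (v s))
      = φ (v s) - (m-1) / s * Ph m φ v s := by
    have e1 : s ^ (1-m) * s ^ (m-1) = 1 := by
      rw [← Real.rpow_add hs.1, show 1 - m + (m-1) = 0 by ring, Real.rpow_zero]
    have e2 : s ^ (1-m-1) = s ^ (1-m) / s := by
      rw [Real.rpow_sub hs.1, Real.rpow_one]
    rw [e2]
    unfold Ph
    rw [← mul_assoc (s ^ (1-m)) (s ^ (m-1)), e1, one_mul]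
    ring
  rw [heq] at h2
  exact h2

lemma PT_zero : PT m φ b v 0 = b := by
  unfold PT
  rw [intervalIntegral.integral_same, add_zero]

lemma PT_contOn (h : PhiOK m φ) (hr0 : 0 ≤ r0) (hv : ContinuousOn v (Icc 0 r0))
    (hv0 : ∀ t ∈ Icc 0 r0, 0 ≤ v t) (hM0 : 0 ≤ M) (hM : ∀ t ∈ Icc 0 r0, v t ≤ M) :
    ContinuousOn (PT m φ b v) (Icc 0 r0) := by
  apply ContinuousOn.add continuousOn_const
  have := intervalIntegral.continuousOn_primitive_interval
    (f := Ph m φ v) (μ := volume) (a := (0:ℝ)) (b := r0)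
    (by rw [uIcc_of_le hr0]
        exact (Ph_contOn h hr0 hv hv0 hM0 hM).integrableOn_compact isCompact_Icc)
  rwa [uIcc_of_le hr0] at this

lemma PT_hasDerivAt (h : PhiOK m φ) (hr0 : 0 ≤ r0) (hv : ContinuousOn v (Icc 0 r0))
    (hv0 : ∀ t ∈ Icc 0 r0, 0 ≤ v t) (hM0 : 0 ≤ M) (hM : ∀ t ∈ Icc 0 r0, v t ≤ M)
    {s : ℝ} (hs : s ∈ Ioo 0 r0) :
    HasDerivAt (PT m φ b v) (Ph m φ v s) s := by
  have hco : ContinuousOn (Ph m φ v) (Ioo 0 r0) :=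
    (Ph_contOn h hr0 hv hv0 hM0 hM).mono Ioo_subset_Icc_self
  apply HasDerivAt.const_add
  apply intervalIntegral.integral_hasDerivAt_right
  · exact ((Ph_contOn h hr0 hv hv0 hM0 hM).mono
      (Icc_subset_Icc le_rfl hs.2.le)).intervalIntegrable_of_Icc hs.1.le
  · exact hco.stronglyMeasurableAtFilter isOpen_Ioo s hs
  · exact hco.continuousAt (isOpen_Ioo.mem_nhds hs)

lemma PT_ge (h : PhiOK m φ) (hv0 : ∀ t ∈ Icc 0 r0, 0 ≤ v t) {r : ℝ}
    (hr : r ∈ Icc 0 r0) : b ≤ PT m φ b v r := by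
  have : 0 ≤ ∫ s in (0:ℝ)..r, Ph m φ v s := by
    apply intervalIntegral.integral_nonneg hr.1
    intro t ht
    exact Ph_nonneg h hv0 ⟨ht.1, le_trans ht.2 hr.2⟩
  unfold PT; linarith

lemma PT_le (h : PhiOK m φ) (hv : ContinuousOn v (Icc 0 r0))
    (hv0 : ∀ t ∈ Icc 0 r0, 0 ≤ v t) (hM0 : 0 ≤ M) (hM : ∀ t ∈ Icc 0 r0, v t ≤ M)
    {r : ℝ} (hr : r ∈ Icc 0 r0) : PT m φ b v r ≤ b + φ M / m * (r^2 / 2) := by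
  have hsub : Icc (0:ℝ) r ⊆ Icc 0 r0 := Icc_subset_Icc le_rfl hr.2
  have h1 : (∫ s in (0:ℝ)..r, Ph m φ v s) ≤ ∫ s in (0:ℝ)..r, φ M / m * s := by
    apply intervalIntegral.integral_mono_on hr.1
    · exact ((Ph_contOn h (le_trans hr.1 hr.2) hv hv0 hM0 hM).mono hsub).intervalIntegrable_of_Icc hr.1
    · exact (continuous_const.mul continuous_id).continuousOn.intervalIntegrable_of_Icc hr.1
    · intro t ht
      exact Ph_le h hv hv0 hM0 hM (hsub ht)
  have h2 : (∫ s in (0:ℝ)..r, φ M / m * s) = φ M / m * (r^2/2) := by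
    rw [intervalIntegral.integral_const_mul, integral_id]
    ring
  unfold PT
  rw [h2] at h1
  linarith

lemma PT_lower (h : PhiOK m φ) (hv : ContinuousOn v (Icc 0 r0))
    (hv0 : ∀ t ∈ Icc 0 r0, 0 ≤ v t) (hb : 0 ≤ b) (hvb : ∀ t ∈ Icc 0 r0, b ≤ v t)
    {r : ℝ} (hr : r ∈ Icc 0 r0) : b + φ b / m * (r^2/2) ≤ PT m φ b v r := by
  have hsub : Icc (0:ℝ) r ⊆ Icc 0 r0 := Icc_subset_Icc le_rfl hr.2
  have h1 : (∫ s in (0:ℝ)..r, φ b / m * s) ≤ ∫ s in (0:ℝ)..r, Ph m φ v s := by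
    apply intervalIntegral.integral_mono_on hr.1
    · exact (continuous_const.mul continuous_id).continuousOn.intervalIntegrable_of_Icc hr.1
    · -- integrability of Ph
      have hM0' : 0 ≤ sSup (v '' Icc 0 r0) ∨ True := Or.inr trivial
      obtain ⟨M', hM'⟩ : ∃ M', ∀ t ∈ Icc 0 r0, v t ≤ M' := by
        obtain ⟨M', hM'⟩ := (isCompact_Icc.image_of_continuousOn hv).bddAbove
        exact ⟨M', fun t ht => hM' ⟨t, ht, rfl⟩⟩
      have hM'0 : 0 ≤ M' := le_trans (hv0 0 ⟨le_rfl, le_trans hr.1 hr.2⟩)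
        (hM' 0 ⟨le_rfl, le_trans hr.1 hr.2⟩)
      exact ((Ph_contOn h (le_trans hr.1 hr.2) hv hv0 hM'0 hM').mono hsub).intervalIntegrable_of_Icc hr.1
    · intro t ht
      exact Ph_ge h hv hv0 hb hvb (hsub ht)
  have h2 : (∫ s in (0:ℝ)..r, φ b / m * s) = φ b / m * (r^2/2) := by
    rw [intervalIntegral.integral_const_mul, integral_id]
    ring
  unfold PT
  rw [h2] at h1
  linarith

lemma PT_mono_v (h : PhiOK m φ) (hv : ContinuousOn v (Icc 0 r0))
    (hv0 : ∀ t ∈ Icc 0 r0, 0 ≤ v t) (hv' : ContinuousOn v' (Icc 0 r0))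
    (hle : ∀ t ∈ Icc 0 r0, v t ≤ v' t) {r : ℝ} (hr : r ∈ Icc 0 r0) :
    PT m φ b v r ≤ PT m φ b v' r := by
  have hv'0 : ∀ t ∈ Icc 0 r0, 0 ≤ v' t := fun t ht => le_trans (hv0 t ht) (hle t ht)
  have hsub : Icc (0:ℝ) r ⊆ Icc 0 r0 := Icc_subset_Icc le_rfl hr.2
  have key : ∀ s ∈ Icc 0 r0, Ph m φ v s ≤ Ph m φ v' s := by
    intro s hs
    apply mul_le_mul_of_nonneg_left _ (Real.rpow_nonneg hs.1 _)
    apply intervalIntegral.integral_mono_on hs.1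
    · exact ((integrand_contOn h hv hv0).mono (Icc_subset_Icc le_rfl hs.2)).intervalIntegrable_of_Icc hs.1
    · exact ((integrand_contOn h hv' hv'0).mono (Icc_subset_Icc le_rfl hs.2)).intervalIntegrable_of_Icc hs.1
    · intro t ht
      have htm : t ∈ Icc 0 r0 := (Icc_subset_Icc le_rfl hs.2) ht
      exact mul_le_mul_of_nonneg_left
        (h.mono (hv0 t htm) (hv'0 t htm) (hle t htm)) (Real.rpow_nonneg ht.1 _)
  unfold PT
  have hr0' : (0:ℝ) ≤ r0 := le_trans hr.1 hr.2
  obtain ⟨M', hM'⟩ : ∃ M', ∀ t ∈ Icc 0 r0, v t ≤ M' := by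
    obtain ⟨M', hM'⟩ := (isCompact_Icc.image_of_continuousOn hv).bddAbove
    exact ⟨M', fun t ht => hM' ⟨t, ht, rfl⟩⟩
  obtain ⟨M'', hM''⟩ : ∃ M'', ∀ t ∈ Icc 0 r0, v' t ≤ M'' := by
    obtain ⟨M'', hM''⟩ := (isCompact_Icc.image_of_continuousOn hv').bddAbove
    exact ⟨M'', fun t ht => hM'' ⟨t, ht, rfl⟩⟩
  have hM'0 : 0 ≤ M' := le_trans (hv0 0 ⟨le_rfl, hr0'⟩) (hM' 0 ⟨le_rfl, hr0'⟩)
  have hM''0 : 0 ≤ M'' := le_trans (hv'0 0 ⟨le_rfl, hr0'⟩) (hM'' 0 ⟨le_rfl, hr0'⟩)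
  have h1 : (∫ s in (0:ℝ)..r, Ph m φ v s) ≤ ∫ s in (0:ℝ)..r, Ph m φ v' s := by
    apply intervalIntegral.integral_mono_on hr.1
    · exact ((Ph_contOn h hr0' hv hv0 hM'0 hM').mono hsub).intervalIntegrable_of_Icc hr.1
    · exact ((Ph_contOn h hr0' hv' hv'0 hM''0 hM'').mono hsub).intervalIntegrable_of_Icc hr.1
    · intro t ht
      exact key t (hsub ht)
  linarith

end Bblock

section Dom

variable {m : ℝ} {φ : ℝ → ℝ} {v : ℝ → ℝ} {r0 : ℝ}

lemma exists_bound (hr0 : 0 ≤ r0) (hv : ContinuousOn v (Icc 0 r0))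
    (hv0 : ∀ t ∈ Icc 0 r0, 0 ≤ v t) : ∃ M, 0 ≤ M ∧ ∀ t ∈ Icc 0 r0, v t ≤ M := by
  obtain ⟨M, hM⟩ := (isCompact_Icc.image_of_continuousOn hv).bddAbove
  refine ⟨M, ?_, fun t ht => hM ⟨t, ht, rfl⟩⟩
  exact le_trans (hv0 0 ⟨le_rfl, hr0⟩) (hM ⟨0, ⟨le_rfl, hr0⟩, rfl⟩)

lemma exists_upper {R : ℝ≥0∞} {s : ℝ} (hs : 0 ≤ s) (h : ENNReal.ofReal s < R) :
    ∃ r', s < r' ∧ ENNReal.ofReal r' < R := by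
  obtain ⟨c, hc1, hc2⟩ := exists_between h
  have hct : c ≠ ⊤ := hc2.ne_top
  refine ⟨c.toReal, ?_, ?_⟩
  · exact (ENNReal.ofReal_lt_iff_lt_toReal hs hct).1 hc1
  · rwa [ENNReal.ofReal_toReal hct]

lemma Icc_subset_odeDom {R : ℝ≥0∞} {r' : ℝ} (h : ENNReal.ofReal r' < R) :
    Icc 0 r' ⊆ odeDom R := by
  intro t ht
  exact ⟨ht.1, lt_of_le_of_lt (ENNReal.ofReal_le_ofReal ht.2) h⟩

lemma zero_mem_odeDom {R : ℝ≥0∞} (hR : 0 < R) : (0:ℝ) ∈ odeDom R := by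
  refine ⟨le_rfl, ?_⟩
  rwa [ENNReal.ofReal_zero]

lemma odeDom_mem_nhds {R : ℝ≥0∞} {s : ℝ} (hs : 0 < s) (h : ENNReal.ofReal s < R) :
    odeDom R ∈ 𝓝 s := by
  obtain ⟨r', hr'1, hr'2⟩ := exists_upper hs.le h
  have hsub : Ioo (0:ℝ) r' ⊆ odeDom R := fun t ht =>
    Icc_subset_odeDom hr'2 ⟨ht.1.le, ht.2.le⟩
  exact Filter.mem_of_superset (Ioo_mem_nhds hs hr'1) hsub

lemma odeDom_eventuallyEq_Ici {R : ℝ≥0∞} (hR : 0 < R) :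
    odeDom R =ᶠ[𝓝 (0:ℝ)] Ici 0 := by
  obtain ⟨δ, hδ1, hδ2⟩ := exists_upper le_rfl (by rwa [ENNReal.ofReal_zero])
  rw [Filter.eventuallyEq_set]
  filter_upwards [Ioo_mem_nhds (by linarith : -δ < (0:ℝ)) hδ1] with x hx
  constructor
  · exact fun hm => hm.1
  · intro hm
    exact ⟨hm, lt_of_le_of_lt (ENNReal.ofReal_le_ofReal hx.2.le) hδ2⟩

lemma odeDom_eq {R : ℝ≥0∞} :
    (R = ⊤ ∧ odeDom R = Ici 0) ∨ odeDom R = Ico 0 R.toReal := by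
  rcases eq_or_ne R ⊤ with hT | hT
  · left
    refine ⟨hT, ?_⟩
    ext r
    simp [odeDom, hT]
  · right
    ext r
    simp only [odeDom, mem_setOf_eq, mem_Ico]
    constructor
    · rintro ⟨h1, h2⟩
      exact ⟨h1, (ENNReal.ofReal_lt_iff_lt_toReal h1 hT).1 h2⟩
    · rintro ⟨h1, h2⟩
      exact ⟨h1, (ENNReal.ofReal_lt_iff_lt_toReal h1 hT).2 h2⟩

lemma odeDom_uniqueDiffOn {R : ℝ≥0∞} : UniqueDiffOn ℝ (odeDom R) := by
  rcases odeDom_eq (R := R) with ⟨_, h⟩ | h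
  · rw [h]; exact uniqueDiffOn_Ici 0
  · rw [h]; exact uniqueDiffOn_Ico 0 _

end Dom

section SolEq

variable {m : ℝ} {φ : ℝ → ℝ}

theorem sol_eq_PT (h : PhiOK m φ) {b : ℝ} {R : ℝ≥0∞} {u : ℝ → ℝ} (hR : 0 < R)
    (hu : IsSolOn m φ b R u) :
    ∀ r, 0 ≤ r → ENNReal.ofReal r < R → u r = PT m φ b u r := by
  obtain ⟨hreg, hpos, hu0, hu'0, hode⟩ := hu
  intro r hr hrR
  rcases eq_or_lt_of_le hr with h0 | h0
  · rw [← h0, PT_zero, hu0]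
  obtain ⟨r', hrr', hr'R⟩ := exists_upper hr hrR
  have hr'0 : (0:ℝ) < r' := lt_trans h0 hrr'
  have hsub : Icc 0 r' ⊆ odeDom R := Icc_subset_odeDom hr'R
  have hsub' : Ioo 0 r' ⊆ odeDom R := fun t ht => hsub ⟨ht.1.le, ht.2.le⟩
  have hsubr : Icc 0 r ⊆ Icc 0 r' := Icc_subset_Icc le_rfl hrr'.le
  have ucont : ContinuousOn u (Icc 0 r') := hreg.continuousOn.mono hsub
  have upos : ∀ t ∈ Icc 0 r', 0 ≤ u t := fun t ht => hpos t (hsub ht)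
  -- basic smoothness on the open interval
  have hreg2 : ContDiffOn ℝ 2 u (Ioo 0 r') := hreg.mono hsub'
  have hdiff : ∀ s ∈ Ioo (0:ℝ) r', HasDerivAt u (deriv u s) s := by
    intro s hs
    exact ((hreg2.contDiffAt (isOpen_Ioo.mem_nhds hs)).differentiableAt
      (by norm_num)).hasDerivAt
  have hderivC1 : ContDiffOn ℝ 1 (deriv u) (Ioo 0 r') :=
    hreg2.deriv_of_isOpen isOpen_Ioo (by norm_num)
  have hdd : ∀ s ∈ Ioo (0:ℝ) r', HasDerivAt (deriv u) (deriv (deriv u) s) s := by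
    intro s hs
    exact ((hderivC1.contDiffAt (isOpen_Ioo.mem_nhds hs)).differentiableAt
      (by norm_num)).hasDerivAt
  have hcd : ContinuousOn (deriv u) (Ioo 0 r') := hderivC1.continuousOn
  -- the limit of deriv u at 0 is 0
  have hUD : UniqueDiffOn ℝ (odeDom R) := odeDom_uniqueDiffOn
  have hdl : ContDiffOn ℝ 1 (derivWithin u (odeDom R)) (odeDom R) := by
    have h2 : ContDiffOn ℝ (1+1 : ℕ) u (odeDom R) := by norm_num; exact hreg
    exact ((contDiffOn_succ_iff_derivWithin hUD).1 (by exact_mod_cast h2)).2.2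
  have hdw0 : derivWithin u (odeDom R) 0 = 0 := by
    rw [derivWithin_congr_set (odeDom_eventuallyEq_Ici hR), hu'0]
  have hdwI : ∀ s ∈ Ioo (0:ℝ) r', derivWithin u (odeDom R) s = deriv u s := by
    intro s hs
    exact derivWithin_of_mem_nhds (odeDom_mem_nhds hs.1
      (lt_of_le_of_lt (ENNReal.ofReal_le_ofReal hs.2.le) hr'R))
  have hlim : Tendsto (deriv u) (𝓝[Ioo 0 r'] 0) (𝓝 0) := by
    have cwa : ContinuousWithinAt (derivWithin u (odeDom R)) (odeDom R) 0 :=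
      hdl.continuousOn 0 (zero_mem_odeDom hR)
    have t1 : Tendsto (derivWithin u (odeDom R)) (𝓝[odeDom R] 0) (𝓝 0) := by
      have := cwa.tendsto
      rwa [hdw0] at this
    have t2 : Tendsto (derivWithin u (odeDom R)) (𝓝[Ioo 0 r'] 0) (𝓝 0) :=
      t1.mono_left (nhdsWithin_mono _ hsub')
    apply t2.congr'
    filter_upwards [self_mem_nhdsWithin] with s hs
    exact hdwI s hs
  -- the auxiliary function g
  set g : ℝ → ℝ := fun s => s ^ (m-1) * deriv u s with hg
  have hg0 : g 0 = 0 := by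
    rw [hg]
    simp only
    rw [Real.zero_rpow (by linarith [h.hm] : m - 1 ≠ 0), zero_mul]
  have gcont : ∀ s ∈ Icc (0:ℝ) r, ContinuousWithinAt g (Icc 0 r) s := by
    intro t ht
    rcases eq_or_lt_of_le ht.1 with h0' | h0'
    · rw [← h0']
      rw [ContinuousWithinAt, hg0]
      have hIcc : Icc (0:ℝ) r = insert 0 (Ioc 0 r) := (Ioc_insert_left hr).symm
      rw [hIcc, nhdsWithin_insert]
      rw [tendsto_sup]
      constructor
      · simpa [hg0] using tendsto_pure_nhds g 0
      · have hmono : 𝓝[Ioc (0:ℝ) r] 0 ≤ 𝓝[Ioo (0:ℝ) r'] 0 :=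
          nhdsWithin_mono _ (fun t ht => ⟨ht.1, lt_of_le_of_lt ht.2 hrr'⟩)
        have l1 : Tendsto (fun s : ℝ => s ^ (m-1)) (𝓝[Ioc (0:ℝ) r] 0) (𝓝 0) := by
          have := (Real.continuousAt_rpow_const 0 (m-1) (Or.inr (by linarith [h.hm]))).tendsto
          rw [Real.zero_rpow (by linarith [h.hm] : m - 1 ≠ 0)] at this
          exact this.mono_left nhdsWithin_le_nhds
        have l2 : Tendsto (deriv u) (𝓝[Ioc (0:ℝ) r] 0) (𝓝 0) := hlim.mono_left hmono
        simpa using l1.mul l2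
    · apply ContinuousAt.continuousWithinAt
      have htI : t ∈ Ioo (0:ℝ) r' := ⟨h0', lt_of_le_of_lt ht.2 hrr'⟩
      exact ((Real.continuousAt_rpow_const t (m-1) (Or.inl (ne_of_gt h0'))).mul
        (hcd.continuousAt (isOpen_Ioo.mem_nhds htI)))
  have gderiv : ∀ s ∈ Ioo (0:ℝ) r, HasDerivAt g (s ^ (m-1) * φ (u s)) s := by
    intro s hs
    have hsI : s ∈ Ioo (0:ℝ) r' := ⟨hs.1, lt_trans hs.2 hrr'⟩
    have h1 : HasDerivAt (fun t : ℝ => t ^ (m-1)) ((m-1) * s ^ (m-1-1)) s :=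
      Real.hasDerivAt_rpow_const (Or.inl (ne_of_gt hs.1))
    have h2 := h1.mul (hdd s hsI)
    have hsR : ENNReal.ofReal s < R :=
      lt_of_le_of_lt (ENNReal.ofReal_le_ofReal hs.2.le) hrR
    have hODE := hode s hs.1 hsR
    have hddval : deriv (deriv u) s = φ (u s) - (m-1) / s * deriv u s := by linarith
    have heq : (m-1) * s ^ (m-1-1) * deriv u s + s ^ (m-1) * deriv (deriv u) s
        = s ^ (m-1) * φ (u s) := by
      rw [hddval]
      have e2 : s ^ (m-1-1) = s ^ (m-1) / s := by
        rw [Real.rpow_sub hs.1, Real.rpow_one]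
      rw [e2]
      field_simp
      ring
    rw [heq] at h2
    exact h2
  have gFTC : ∀ s ∈ Ioc (0:ℝ) r, Pint m φ u s = g s := by
    intro s hs
    have : ∫ t in (0:ℝ)..s, t ^ (m-1) * φ (u t) = g s - g 0 := by
      apply intervalIntegral.integral_eq_sub_of_hasDeriv_right_of_le hs.1.le
      · intro t ht
        exact (gcont t (⟨ht.1, le_trans ht.2 hs.2⟩)).mono (Icc_subset_Icc le_rfl hs.2)
      · intro t ht
        exact (gderiv t ⟨ht.1, lt_of_lt_of_le ht.2 hs.2⟩).hasDerivWithinAt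
      · exact ((integrand_contOn h ucont upos).mono
          (Icc_subset_Icc le_rfl (le_trans hs.2 hrr'.le))).intervalIntegrable_of_Icc hs.1.le
    unfold Pint
    rw [this, hg0, sub_zero]
  have du_eq : ∀ s ∈ Ioc (0:ℝ) r, deriv u s = Ph m φ u s := by
    intro s hs
    have e1 : s ^ (1-m) * s ^ (m-1) = 1 := by
      rw [← Real.rpow_add hs.1, show 1 - m + (m-1) = 0 by ring, Real.rpow_zero]
    unfold Ph
    rw [gFTC s hs, hg]
    simp only
    rw [← mul_assoc, e1, one_mul]
  -- integrability of deriv u on [0, r]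
  obtain ⟨M, hM0, hM⟩ := exists_bound hr'0.le ucont upos
  have hPh_cont : ContinuousOn (Ph m φ u) (Icc 0 r') :=
    Ph_contOn h hr'0.le ucont upos hM0 hM
  have hint : IntervalIntegrable (deriv u) volume 0 r := by
    rw [intervalIntegrable_iff_integrableOn_Ioc_of_le hr]
    apply IntegrableOn.congr_fun _ _ measurableSet_Ioc
    · exact Ph m φ u
    · exact ((hPh_cont.mono hsubr).integrableOn_compact isCompact_Icc).mono_set
        Ioc_subset_Icc_self
    · intro s hs
      exact (du_eq s hs).symm
  have uFTC : ∫ s in (0:ℝ)..r, deriv u s = u r - u 0 := by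
    apply intervalIntegral.integral_eq_sub_of_hasDeriv_right_of_le hr
    · exact (ucont.mono hsubr)
    · intro t ht
      exact (hdiff t ⟨ht.1, lt_trans ht.2 hrr'⟩).hasDerivWithinAt
    · exact hint
  have hcongr : ∫ s in (0:ℝ)..r, deriv u s = ∫ s in (0:ℝ)..r, Ph m φ u s := by
    apply intervalIntegral.integral_congr_ae
    apply ae_of_all
    intro s hs
    rw [uIoc_of_le hr] at hs
    exact du_eq s hs
  unfold PT
  rw [← hcongr, uFTC, hu0]
  ring

end SolEq

section SolFacts

variable {m : ℝ} {φ : ℝ → ℝ} {b : ℝ} {R : ℝ≥0∞} {u : ℝ → ℝ}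

theorem sol_b_nonneg (hR : 0 < R) (hu : IsSolOn m φ b R u) : 0 ≤ b := by
  have := hu.2.1 0 (zero_mem_odeDom hR)
  rwa [hu.2.2.1] at this

theorem sol_mono (h : PhiOK m φ) (hR : 0 < R) (hu : IsSolOn m φ b R u) {r1 r2 : ℝ}
    (h1 : 0 ≤ r1) (h12 : r1 ≤ r2) (h2R : ENNReal.ofReal r2 < R) : u r1 ≤ u r2 := by
  have h2 : 0 ≤ r2 := h1.trans h12
  have h1R : ENNReal.ofReal r1 < R := lt_of_le_of_lt (ENNReal.ofReal_le_ofReal h12) h2R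
  have e1 := sol_eq_PT h hR hu r1 h1 h1R
  have e2 := sol_eq_PT h hR hu r2 h2 h2R
  have hsub : Icc 0 r2 ⊆ odeDom R := Icc_subset_odeDom h2R
  have ucont : ContinuousOn u (Icc 0 r2) := hu.1.continuousOn.mono hsub
  have upos : ∀ t ∈ Icc 0 r2, 0 ≤ u t := fun t ht => hu.2.1 t (hsub ht)
  obtain ⟨M, hM0, hM⟩ := exists_bound h2 ucont upos
  have hPh_cont : ContinuousOn (Ph m φ u) (Icc 0 r2) := Ph_contOn h h2 ucont upos hM0 hM
  have hint1 : IntervalIntegrable (Ph m φ u) volume 0 r1 :=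
    (hPh_cont.mono (Icc_subset_Icc le_rfl h12)).intervalIntegrable_of_Icc h1
  have hint2 : IntervalIntegrable (Ph m φ u) volume r1 r2 := by
    apply ContinuousOn.intervalIntegrable
    apply hPh_cont.mono
    rw [uIcc_of_le h12]
    exact Icc_subset_Icc h1 le_rfl
  have hadd := intervalIntegral.integral_add_adjacent_intervals hint1 hint2
  have hnn : 0 ≤ ∫ s in r1..r2, Ph m φ u s := by
    apply intervalIntegral.integral_nonneg h12
    intro t ht
    exact Ph_nonneg h upos ⟨h1.trans ht.1, ht.2⟩
  rw [e1, e2]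
  unfold PT
  rw [← hadd]
  linarith

theorem sol_lower (h : PhiOK m φ) (hR : 0 < R) (hu : IsSolOn m φ b R u) {r : ℝ}
    (hr : 0 ≤ r) (hrR : ENNReal.ofReal r < R) :
    b + φ b / m * (r^2/2) ≤ u r := by
  have hsub : Icc 0 r ⊆ odeDom R := Icc_subset_odeDom hrR
  have ucont : ContinuousOn u (Icc 0 r) := hu.1.continuousOn.mono hsub
  have upos : ∀ t ∈ Icc 0 r, 0 ≤ u t := fun t ht => hu.2.1 t (hsub ht)
  have hb : 0 ≤ b := sol_b_nonneg hR hu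
  have hub : ∀ t ∈ Icc 0 r, b ≤ u t := by
    intro t ht
    have := sol_mono h hR hu (le_rfl : (0:ℝ) ≤ 0) ht.1
      (lt_of_le_of_lt (ENNReal.ofReal_le_ofReal ht.2) hrR)
    rwa [hu.2.2.1] at this
  rw [sol_eq_PT h hR hu r hr hrR]
  exact PT_lower h ucont upos hb hub ⟨hr, le_rfl⟩

theorem sol_shift_super (h : PhiOK m φ) (hR : 0 < R) (hu : IsSolOn m φ b R u)
    {r2 : ℝ} (hr2 : 0 ≤ r2) {r : ℝ} (hr : 0 ≤ r)
    (hrR : ENNReal.ofReal (r2 + r) < R) :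
    PT m φ (u r2) (fun s => u (r2 + s)) r ≤ u (r2 + r) := by
  have hr2R : ENNReal.ofReal r2 < R :=
    lt_of_le_of_lt (ENNReal.ofReal_le_ofReal (by linarith)) hrR
  have hrr : 0 ≤ r2 + r := by linarith
  have hsub : Icc 0 (r2+r) ⊆ odeDom R := Icc_subset_odeDom hrR
  have ucont : ContinuousOn u (Icc 0 (r2+r)) := hu.1.continuousOn.mono hsub
  have upos : ∀ t ∈ Icc 0 (r2+r), 0 ≤ u t := fun t ht => hu.2.1 t (hsub ht)
  obtain ⟨M, hM0, hM⟩ := exists_bound hrr ucont upos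
  have hPh_cont : ContinuousOn (Ph m φ u) (Icc 0 (r2+r)) := Ph_contOn h hrr ucont upos hM0 hM
  -- w and its continuity
  set w : ℝ → ℝ := fun s => u (r2 + s) with hw
  have wcont : ContinuousOn w (Icc 0 r) := by
    apply ucont.comp (continuous_const.add continuous_id).continuousOn
    intro t ht
    exact ⟨by simp; linarith [ht.1], by simp; linarith [ht.2]⟩
  have wpos : ∀ t ∈ Icc 0 r, 0 ≤ w t := fun t ht => upos _ ⟨by linarith [ht.1], by linarith [ht.2]⟩
  -- the difference u (r2+r) - u r2 equals an integral of Ph u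
  have e1 := sol_eq_PT h hR hu r2 hr2 hr2R
  have e2 := sol_eq_PT h hR hu (r2+r) hrr hrR
  have hint1 : IntervalIntegrable (Ph m φ u) volume 0 r2 :=
    (hPh_cont.mono (Icc_subset_Icc le_rfl (by linarith))).intervalIntegrable_of_Icc hr2
  have hint2 : IntervalIntegrable (Ph m φ u) volume r2 (r2+r) := by
    apply ContinuousOn.intervalIntegrable
    apply hPh_cont.mono
    rw [uIcc_of_le (by linarith : r2 ≤ r2 + r)]
    exact Icc_subset_Icc hr2 le_rfl
  have hadd := intervalIntegral.integral_add_adjacent_intervals hint1 hint2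
  have hdiff : u (r2+r) - u r2 = ∫ τ in r2..(r2+r), Ph m φ u τ := by
    rw [e1, e2]
    unfold PT
    rw [← hadd]
    ring
  -- change of variables
  have hcv : (∫ τ in r2..(r2+r), Ph m φ u τ) = ∫ s in (0:ℝ)..r, Ph m φ u (r2 + s) := by
    rw [intervalIntegral.integral_comp_add_left (f := Ph m φ u) (a := (0:ℝ)) (b := r) r2]
    norm_num
  -- pointwise comparison
  have key : ∀ s ∈ Icc (0:ℝ) r, Ph m φ w s ≤ Ph m φ u (r2 + s) := by
    intro s hs
    have hs2 : (0:ℝ) ≤ r2 + s := by linarith [hs.1]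
    -- Ph u (r2+s) ≥ (r2+s)^(1-m) * ∫_{r2}^{r2+s} ...
    have hdrop : (∫ t in r2..(r2+s), t ^ (m-1) * φ (u t)) ≤ Pint m φ u (r2+s) := by
      have hi1 : IntervalIntegrable (fun t => t ^ (m-1) * φ (u t)) volume 0 r2 :=
        ((integrand_contOn h ucont upos).mono
          (Icc_subset_Icc le_rfl (by linarith))).intervalIntegrable_of_Icc hr2
      have hi2 : IntervalIntegrable (fun t => t ^ (m-1) * φ (u t)) volume r2 (r2+s) := by
        apply ContinuousOn.intervalIntegrable
        apply (integrand_contOn h ucont upos).mono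
        rw [uIcc_of_le (by linarith [hs.1] : r2 ≤ r2 + s)]
        exact Icc_subset_Icc hr2 (by linarith [hs.2])
      have hadd2 := intervalIntegral.integral_add_adjacent_intervals hi1 hi2
      have hnn : 0 ≤ ∫ t in (0:ℝ)..r2, t ^ (m-1) * φ (u t) := by
        apply intervalIntegral.integral_nonneg hr2
        intro t ht
        exact integrand_nonneg h upos t ⟨ht.1, by linarith [ht.2, hs.1]⟩
      unfold Pint
      rw [← hadd2]
      linarith
    have h1 : Ph m φ u (r2+s) ≥ (r2+s) ^ (1-m) * ∫ t in r2..(r2+s), t ^ (m-1) * φ (u t) := by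
      unfold Ph
      exact mul_le_mul_of_nonneg_left hdrop (Real.rpow_nonneg hs2 _)
    -- change of variables in the inner integral
    have hcv2 : (∫ t in r2..(r2+s), t ^ (m-1) * φ (u t))
        = ∫ t in (0:ℝ)..s, (r2+t) ^ (m-1) * φ (w t) := by
      rw [intervalIntegral.integral_comp_add_left
        (f := fun t => t ^ (m-1) * φ (u t)) (a := (0:ℝ)) (b := s) r2]
      norm_num
    -- pointwise kernel comparison after multiplying in the outer factor
    have h2 : s ^ (1-m) * ∫ t in (0:ℝ)..s, t ^ (m-1) * φ (w t)
        ≤ (r2+s) ^ (1-m) * ∫ t in (0:ℝ)..s, (r2+t) ^ (m-1) * φ (w t) := by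
      rcases eq_or_lt_of_le hs.1 with h0 | h0
      · rw [← h0]
        simp
      have wcont' : ContinuousOn w (Icc 0 s) := wcont.mono (Icc_subset_Icc le_rfl hs.2)
      have wpos' : ∀ t ∈ Icc (0:ℝ) s, 0 ≤ w t :=
        fun t ht => wpos t ⟨ht.1, le_trans ht.2 hs.2⟩
      rw [← intervalIntegral.integral_const_mul, ← intervalIntegral.integral_const_mul]
      apply intervalIntegral.integral_mono_on hs.1
      · exact (((integrand_contOn h wcont' wpos').const_smul
          (s ^ (1-m))).intervalIntegrable_of_Icc hs.1)
      · apply ContinuousOn.intervalIntegrable_of_Icc hs.1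
        apply ContinuousOn.const_smul _ ((r2+s) ^ (1-m))
        apply ContinuousOn.mul
        · exact ((cont_rpow_exp h.hm1).comp (continuous_const.add continuous_id)).continuousOn
        · exact h.contOn.comp wcont' (fun t ht => wpos' t ht)
      · intro t ht
        have hker : s ^ (1-m) * t ^ (m-1) ≤ (r2+s) ^ (1-m) * (r2+t) ^ (m-1) := by
          have hrs : (0:ℝ) < r2 + s := by linarith
          have e1' : s ^ (1-m) * t ^ (m-1) = (t/s) ^ (m-1) := by
            rw [Real.div_rpow ht.1 h0.le, show (1:ℝ) - m = -(m-1) by ring,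
              Real.rpow_neg h0.le]
            ring
          have e2' : (r2+s) ^ (1-m) * (r2+t) ^ (m-1) = ((r2+t)/(r2+s)) ^ (m-1) := by
            rw [Real.div_rpow (by linarith [ht.1] : (0:ℝ) ≤ r2 + t) hrs.le,
              show (1:ℝ) - m = -(m-1) by ring, Real.rpow_neg hrs.le]
            ring
          rw [e1', e2']
          apply Real.rpow_le_rpow (div_nonneg ht.1 h0.le) _ (le_of_lt h.hm1)
          rw [div_le_div_iff₀ h0 hrs]
          nlinarith [ht.2, hs.1, hr2, ht.1]
        have hphi : 0 ≤ φ (w t) := h.nonneg _ (wpos t ⟨ht.1, le_trans ht.2 hs.2⟩)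
        calc s ^ (1-m) * (t ^ (m-1) * φ (w t)) = (s ^ (1-m) * t ^ (m-1)) * φ (w t) := by ring
          _ ≤ ((r2+s) ^ (1-m) * (r2+t) ^ (m-1)) * φ (w t) :=
              mul_le_mul_of_nonneg_right hker hphi
          _ = (r2+s) ^ (1-m) * ((r2+t) ^ (m-1) * φ (w t)) := by ring
    unfold Ph Pint
    calc s ^ (1-m) * ∫ t in (0:ℝ)..s, t ^ (m-1) * φ (w t)
        ≤ (r2+s) ^ (1-m) * ∫ t in (0:ℝ)..s, (r2+t) ^ (m-1) * φ (w t) := h2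
      _ = (r2+s) ^ (1-m) * ∫ t in r2..(r2+s), t ^ (m-1) * φ (u t) := by rw [hcv2]
      _ ≤ Ph m φ u (r2+s) := h1
  -- conclude
  obtain ⟨M', hM'0, hM'⟩ := exists_bound hr wcont wpos
  have hPhw_cont : ContinuousOn (Ph m φ w) (Icc 0 r) := Ph_contOn h hr wcont wpos hM'0 hM'
  have hint3 : IntervalIntegrable (fun s => Ph m φ u (r2 + s)) volume 0 r := by
    apply ContinuousOn.intervalIntegrable_of_Icc hr
    apply hPh_cont.comp (continuous_const.add continuous_id).continuousOn
    intro t ht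
    simp only [mem_Icc, Pi.add_apply, id_eq, Function.comp] at ht ⊢
    constructor <;> linarith [ht.1, ht.2]
  have hfin : (∫ s in (0:ℝ)..r, Ph m φ w s) ≤ ∫ s in (0:ℝ)..r, Ph m φ u (r2 + s) := by
    apply intervalIntegral.integral_mono_on hr
    · exact hPhw_cont.intervalIntegrable_of_Icc hr
    · exact hint3
    · exact key
  unfold PT
  linarith [hfin, hdiff, hcv.symm ▸ hdiff]

end SolFacts

section Glue

variable {m : ℝ} {φ : ℝ → ℝ}

lemma Icc_eventuallyEq_Ici {r' : ℝ} (hr' : 0 < r') : Icc (0:ℝ) r' =ᶠ[𝓝 0] Ici 0 := by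
  rw [Filter.eventuallyEq_set]
  filter_upwards [Ioo_mem_nhds (by linarith : -(1:ℝ) < 0) hr'] with x hx
  simp only [mem_Icc, mem_Ici]
  exact ⟨fun h => h.1, fun h => ⟨h, hx.2.le⟩⟩

lemma contOn_odeDom_of_Icc {f : ℝ → ℝ} {ρ : ℝ≥0∞} (hρ : 0 < ρ)
    (hf : ∀ r' : ℝ, 0 < r' → ENNReal.ofReal r' < ρ → ContinuousOn f (Icc 0 r')) :
    ContinuousOn f (odeDom ρ) := by
  intro r hr
  obtain ⟨r', hrr', hr'ρ⟩ := exists_upper hr.1 hr.2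
  have hr'0 : 0 < r' := lt_of_le_of_lt hr.1 hrr'
  have h1 : ContinuousWithinAt f (Icc 0 r') r := hf r' hr'0 hr'ρ r ⟨hr.1, hrr'.le⟩
  rcases eq_or_lt_of_le hr.1 with h0 | h0
  · rw [← h0] at h1 ⊢
    have hEq : Icc (0:ℝ) r' =ᶠ[𝓝 0] odeDom ρ :=
      (Icc_eventuallyEq_Ici hr'0).trans (odeDom_eventuallyEq_Ici hρ).symm
    exact (continuousWithinAt_congr_set hEq).1 h1
  · exact (h1.continuousAt (Icc_mem_nhds h0 hrr')).continuousWithinAt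

end Glue

section Exists

variable {m : ℝ} {φ : ℝ → ℝ}

theorem sol_of_fixedpoint (h : PhiOK m φ) {b : ℝ} (hb : 0 ≤ b) {ρ : ℝ≥0∞} (hρ : 0 < ρ)
    {w : ℝ → ℝ} (hwc : ContinuousOn w (odeDom ρ)) (hwb : ∀ r ∈ odeDom ρ, b ≤ w r)
    (hfix : ∀ r ∈ odeDom ρ, w r = PT m φ b w r) : IsSolOn m φ b ρ (PT m φ b w) := by
  set u : ℝ → ℝ := PT m φ b w with hu
  have h0mem : (0:ℝ) ∈ odeDom ρ := zero_mem_odeDom hρ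
  have hUD : UniqueDiffOn ℝ (odeDom ρ) := odeDom_uniqueDiffOn
  have hw0 : w 0 = b := by rw [hfix 0 h0mem]; exact PT_zero
  have hwpos : ∀ t ∈ odeDom ρ, 0 ≤ w t := fun t ht => le_trans hb (hwb t ht)
  -- local data on compact intervals
  have hIccFacts : ∀ r' : ℝ, 0 < r' → ENNReal.ofReal r' < ρ →
      ContinuousOn w (Icc 0 r') ∧ (∀ t ∈ Icc (0:ℝ) r', 0 ≤ w t) ∧
        (∀ t ∈ Icc (0:ℝ) r', b ≤ w t) := by
    intro r' hr'0 hr'ρ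
    have hsub : Icc 0 r' ⊆ odeDom ρ := Icc_subset_odeDom hr'ρ
    exact ⟨hwc.mono hsub, fun t ht => hwpos t (hsub ht), fun t ht => hwb t (hsub ht)⟩
  -- K1 : derivative of u away from 0
  have K1 : ∀ s : ℝ, 0 < s → ENNReal.ofReal s < ρ → HasDerivAt u (Ph m φ w s) s := by
    intro s hs0 hsρ
    obtain ⟨r', hsr', hr'ρ⟩ := exists_upper hs0.le hsρ
    have hr'0 : 0 < r' := lt_trans hs0 hsr'
    obtain ⟨hc, hp, _⟩ := hIccFacts r' hr'0 hr'ρ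
    obtain ⟨M, hM0, hM⟩ := exists_bound hr'0.le hc hp
    exact PT_hasDerivAt h hr'0.le hc hp hM0 hM ⟨hs0, hsr'⟩
  -- fix a reference radius for squeezes near 0
  obtain ⟨r₁, hr₁0, hr₁ρ⟩ := exists_upper le_rfl (by rwa [ENNReal.ofReal_zero] : ENNReal.ofReal 0 < ρ)
  obtain ⟨wc₁, wp₁, wb₁⟩ := hIccFacts r₁ hr₁0 hr₁ρ
  obtain ⟨M₁, hM₁0, hM₁⟩ := exists_bound hr₁0.le wc₁ wp₁
  have hIooMem : Ioo (0:ℝ) r₁ ∈ 𝓝[odeDom ρ \ {0}] 0 := by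
    have h1 : Ioo (-r₁) r₁ ∈ 𝓝 (0:ℝ) := Ioo_mem_nhds (by linarith) hr₁0
    have h2 : odeDom ρ \ {0} ∈ 𝓝[odeDom ρ \ {0}] (0:ℝ) := self_mem_nhdsWithin
    have h3 := Filter.inter_mem (mem_nhdsWithin_of_mem_nhds h1) h2
    apply Filter.mem_of_superset h3
    rintro t ⟨ht1, ht2, ht3⟩
    have ht0 : t ≠ 0 := ht3
    exact ⟨lt_of_le_of_ne ht2.1 (Ne.symm ht0), ht1.2⟩
  -- K2 : derivative of u at 0 within the domain
  have K2 : HasDerivWithinAt u 0 (odeDom ρ) 0 := by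
    rw [hasDerivWithinAt_iff_tendsto_slope]
    have hb1 : ∀ᶠ s in 𝓝[odeDom ρ \ {0}] 0, ‖slope u 0 s‖ ≤ φ M₁ / m * s / 2 := by
      filter_upwards [hIooMem] with s hs
      have hsIcc : s ∈ Icc 0 r₁ := ⟨hs.1.le, hs.2.le⟩
      have hge : b ≤ u s := PT_ge h wp₁ hsIcc
      have hle : u s ≤ b + φ M₁ / m * (s^2/2) := PT_le h wc₁ wp₁ hM₁0 hM₁ hsIcc
      have hu0' : u 0 = b := PT_zero
      rw [slope_def_field, hu0', sub_zero]
      rw [Real.norm_eq_abs, abs_of_nonneg (div_nonneg (by linarith) hs.1.le)]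
      rw [div_le_iff₀ hs.1]
      nlinarith [hs.1]
    have hg : Tendsto (fun s : ℝ => φ M₁ / m * s / 2) (𝓝[odeDom ρ \ {0}] 0) (𝓝 0) := by
      have : Tendsto (fun s : ℝ => φ M₁ / m * s / 2) (𝓝 (0:ℝ)) (𝓝 (φ M₁ / m * 0 / 2)) :=
        Continuous.tendsto ((continuous_const.mul continuous_id).div_const 2) 0
      rw [mul_zero, zero_div] at this
      exact this.mono_left nhdsWithin_le_nhds
    exact squeeze_zero_norm' hb1 hg
  -- L : the ratio limit
  have L : Tendsto (fun s => Pint m φ w s / s ^ m) (𝓝[odeDom ρ \ {0}] 0) (𝓝 (φ b / m)) := by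
    rw [Metric.tendsto_nhds]
    intro ε hε
    set ε' : ℝ := m * ε / 2 with hε'def
    have hε' : 0 < ε' := by
      have := h.hm0
      positivity
    -- continuity of φ ∘ w at 0 within the domain
    have hcont : Tendsto (fun t => φ (w t)) (𝓝[odeDom ρ] 0) (𝓝 (φ b)) := by
      have h1 : ContinuousWithinAt (fun t => φ (w t)) (odeDom ρ) 0 :=
        (h.contOn.comp hwc (fun t ht => hwpos t ht)) 0 h0mem
      have := h1.tendsto
      rwa [hw0] at this
    have hev : ∀ᶠ t in 𝓝[odeDom ρ] 0, |φ (w t) - φ b| < ε' := by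
      have := hcont.eventually (Metric.ball_mem_nhds (φ b) hε')
      filter_upwards [this] with t ht
      rwa [Real.dist_eq] at ht
    rw [Filter.eventually_iff, Metric.mem_nhdsWithin_iff] at hev
    obtain ⟨δ, hδ0, hδsub⟩ := hev
    have hδ : ∀ t : ℝ, dist t 0 < δ → t ∈ odeDom ρ → |φ (w t) - φ b| < ε' :=
      fun t h1 h2 => hδsub ⟨Metric.mem_ball.2 h1, h2⟩
    have hball : ∀ᶠ s in 𝓝[odeDom ρ \ {0}] 0, s ∈ Ioo 0 r₁ ∧ |s| < δ := by
      have h2 : ∀ᶠ s in 𝓝[odeDom ρ \ {0}] (0:ℝ), dist s 0 < δ :=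
        mem_nhdsWithin_of_mem_nhds (Metric.ball_mem_nhds 0 hδ0)
      filter_upwards [hIooMem, h2] with s h1' h2'
      rw [Real.dist_eq, sub_zero] at h2'
      exact ⟨h1', h2'⟩
    filter_upwards [hball] with s hsb
    obtain ⟨hs, hsδ⟩ := hsb
    have hsIcc : Icc (0:ℝ) s ⊆ odeDom ρ :=
      Icc_subset_odeDom (lt_of_le_of_lt (ENNReal.ofReal_le_ofReal hs.2.le)
        (lt_of_le_of_lt (ENNReal.ofReal_le_ofReal le_rfl) hr₁ρ))
    have hwcs : ContinuousOn w (Icc 0 s) := hwc.mono hsIcc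
    have hwps : ∀ t ∈ Icc (0:ℝ) s, 0 ≤ w t := fun t ht => hwpos t (hsIcc ht)
    have hintc : ContinuousOn (fun t => t ^ (m-1) * φ (w t)) (Icc 0 s) :=
      integrand_contOn h hwcs hwps
    -- bounds on φ ∘ w on [0, s]
    have hφbnd : ∀ t ∈ Icc (0:ℝ) s, φ b ≤ φ (w t) ∧ φ (w t) ≤ φ b + ε' := by
      intro t ht
      constructor
      · exact h.mono hb (hwps t ht) (hwb t (hsIcc ht))
      · have htδ : dist t 0 < δ := by
          rw [Real.dist_eq, sub_zero, abs_of_nonneg ht.1]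
          calc t ≤ s := ht.2
            _ = |s| := (abs_of_nonneg hs.1.le).symm
            _ < δ := hsδ
        have := hδ t htδ (hsIcc ht)
        have habs := abs_lt.1 this
        linarith [habs.2]
    -- comparison of integrals
    have hlow : φ b * (s ^ m / m) ≤ Pint m φ w s := by
      have h1 : (∫ t in (0:ℝ)..s, t ^ (m-1) * φ b) ≤ Pint m φ w s := by
        apply intervalIntegral.integral_mono_on hs.1.le
        · exact (((cont_rpow_exp h.hm1).mul continuous_const).continuousOn).intervalIntegrable_of_Icc hs.1.le
        · exact hintc.intervalIntegrable_of_Icc hs.1.le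
        · intro t ht
          exact mul_le_mul_of_nonneg_left (hφbnd t ht).1 (Real.rpow_nonneg ht.1 _)
      rwa [intervalIntegral.integral_mul_const, integral_rpow_exp h hs.1.le, mul_comm] at h1
    have hhigh : Pint m φ w s ≤ (φ b + ε') * (s ^ m / m) := by
      have h1 : Pint m φ w s ≤ ∫ t in (0:ℝ)..s, t ^ (m-1) * (φ b + ε') := by
        apply intervalIntegral.integral_mono_on hs.1.le
        · exact hintc.intervalIntegrable_of_Icc hs.1.le
        · exact (((cont_rpow_exp h.hm1).mul continuous_const).continuousOn).intervalIntegrable_of_Icc hs.1.le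
        · intro t ht
          exact mul_le_mul_of_nonneg_left (hφbnd t ht).2 (Real.rpow_nonneg ht.1 _)
      rwa [intervalIntegral.integral_mul_const, integral_rpow_exp h hs.1.le, mul_comm] at h1
    -- conclude
    have hsm : (0:ℝ) < s ^ m := Real.rpow_pos_of_pos hs.1 m
    rw [Real.dist_eq]
    have e1 : φ b / m ≤ Pint m φ w s / s ^ m := by
      rw [le_div_iff₀ hsm]
      calc φ b / m * s ^ m = φ b * (s ^ m / m) := by ring
        _ ≤ Pint m φ w s := hlow
    have e2 : Pint m φ w s / s ^ m ≤ φ b / m + ε' / m := by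
      rw [div_le_iff₀ hsm]
      calc Pint m φ w s ≤ (φ b + ε') * (s ^ m / m) := hhigh
        _ = (φ b / m + ε' / m) * s ^ m := by ring
    have e3 : ε' / m = ε / 2 := by
      have hm0' : (m:ℝ) ≠ 0 := ne_of_gt h.hm0
      rw [hε'def]
      field_simp
    rw [abs_of_nonneg (by linarith : (0:ℝ) ≤ Pint m φ w s / s ^ m - φ b / m)]
    linarith
  -- slope of Ph w near 0 equals the ratio
  have hslope_eq : ∀ᶠ s in 𝓝[odeDom ρ \ {0}] 0,
      slope (Ph m φ w) 0 s = Pint m φ w s / s ^ m := by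
    filter_upwards [hIooMem] with s hs
    have hsm : (0:ℝ) < s ^ m := Real.rpow_pos_of_pos hs.1 m
    have e : s ^ (1-m) * s ^ m = s := by
      rw [← Real.rpow_add hs.1, show 1-m+m = (1:ℝ) by ring, Real.rpow_one]
    have e2 : s ^ ((1:ℝ)-m) = s / s ^ m := by
      rw [eq_div_iff (ne_of_gt hsm)]
      exact e
    have hs0' : s ≠ 0 := ne_of_gt hs.1
    have hsm' : s ^ m ≠ 0 := ne_of_gt hsm
    rw [slope_def_field, Ph_zero h, sub_zero, sub_zero]
    unfold Ph
    rw [e2]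
    field_simp
  -- K3 : derivative of Ph w at 0 within the domain
  have K3 : HasDerivWithinAt (Ph m φ w) (φ b / m) (odeDom ρ) 0 := by
    rw [hasDerivWithinAt_iff_tendsto_slope]
    have hse : (fun s => slope (Ph m φ w) 0 s)
        =ᶠ[𝓝[odeDom ρ \ {0}] 0] (fun s => Pint m φ w s / s ^ m) := hslope_eq
    exact Filter.Tendsto.congr' hse.symm L
  -- K4 : derivative of Ph w away from 0
  have K4 : ∀ s : ℝ, 0 < s → ENNReal.ofReal s < ρ →
      HasDerivAt (Ph m φ w) (φ (w s) - (m-1) / s * Ph m φ w s) s := by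
    intro s hs0 hsρ
    obtain ⟨r', hsr', hr'ρ⟩ := exists_upper hs0.le hsρ
    have hr'0 : 0 < r' := lt_trans hs0 hsr'
    obtain ⟨hc, hp, _⟩ := hIccFacts r' hr'0 hr'ρ
    exact Ph_hasDerivAt h hr'0.le hc hp ⟨hs0, hsr'⟩
  -- continuity of Ph w on the domain
  have hPhc : ContinuousOn (Ph m φ w) (odeDom ρ) := by
    apply contOn_odeDom_of_Icc hρ
    intro r' hr'0 hr'ρ
    obtain ⟨hc, hp, _⟩ := hIccFacts r' hr'0 hr'ρ
    obtain ⟨M, hM0, hM⟩ := exists_bound hr'0.le hc hp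
    exact Ph_contOn h hr'0.le hc hp hM0 hM
  -- derivWithin of Ph w
  have hD0 : derivWithin (Ph m φ w) (odeDom ρ) 0 = φ b / m := K3.derivWithin (hUD 0 h0mem)
  have hDs : ∀ s : ℝ, 0 < s → ENNReal.ofReal s < ρ →
      derivWithin (Ph m φ w) (odeDom ρ) s = φ (w s) - (m-1) / s * Ph m φ w s := by
    intro s hs0 hsρ
    rw [derivWithin_of_mem_nhds (odeDom_mem_nhds hs0 hsρ)]
    exact (K4 s hs0 hsρ).deriv
  -- limit of E at 0 within the domain
  have hφw0 : Tendsto (fun t => φ (w t)) (𝓝[odeDom ρ] 0) (𝓝 (φ b)) := by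
    have h1 : ContinuousWithinAt (fun t => φ (w t)) (odeDom ρ) 0 :=
      (h.contOn.comp hwc (fun t ht => hwpos t ht)) 0 h0mem
    have := h1.tendsto
    rwa [hw0] at this
  have hElim : Tendsto (fun s => φ (w s) - (m-1) / s * Ph m φ w s)
      (𝓝[odeDom ρ \ {0}] 0) (𝓝 (φ b / m)) := by
    have t1 : Tendsto (fun s => φ (w s)) (𝓝[odeDom ρ \ {0}] 0) (𝓝 (φ b)) :=
      hφw0.mono_left (nhdsWithin_mono _ diff_subset)
    have t2 : Tendsto (fun s => (m-1) / s * Ph m φ w s) (𝓝[odeDom ρ \ {0}] 0)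
        (𝓝 ((m-1) * (φ b / m))) := by
      have heq : ∀ᶠ s in 𝓝[odeDom ρ \ {0}] 0,
          (m-1) * (Pint m φ w s / s ^ m) = (m-1) / s * Ph m φ w s := by
        filter_upwards [hIooMem] with s hs
        have hsm : (0:ℝ) < s ^ m := Real.rpow_pos_of_pos hs.1 m
        have e : s ^ (1-m) * s ^ m = s := by
          rw [← Real.rpow_add hs.1, show 1-m+m = (1:ℝ) by ring, Real.rpow_one]
        have e2 : s ^ ((1:ℝ)-m) = s / s ^ m := by
          rw [eq_div_iff (ne_of_gt hsm)]
          exact e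
        have hs0' : s ≠ 0 := ne_of_gt hs.1
        have hsm' : s ^ m ≠ 0 := ne_of_gt hsm
        unfold Ph
        rw [e2]
        field_simp
      exact Filter.Tendsto.congr' heq (tendsto_const_nhds.mul L)
    have t3 := t1.sub t2
    have : φ b - (m-1) * (φ b / m) = φ b / m := by
      have hm0' : (m:ℝ) ≠ 0 := ne_of_gt h.hm0
      field_simp
      ring
    rwa [this] at t3
  -- continuity of derivWithin (Ph w) on the domain
  have hDcont : ContinuousOn (derivWithin (Ph m φ w) (odeDom ρ)) (odeDom ρ) := by
    intro s hs
    rcases eq_or_lt_of_le hs.1 with h0 | h0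
    · rw [← h0]
      rw [ContinuousWithinAt, hD0]
      have hsplit : odeDom ρ = insert 0 (odeDom ρ \ {0}) := by
        rw [Set.insert_diff_singleton, Set.insert_eq_self.2 h0mem]
      have hfeq : 𝓝[odeDom ρ] (0:ℝ) = pure 0 ⊔ 𝓝[odeDom ρ \ {0}] 0 := by
        conv_lhs => rw [hsplit]
        rw [nhdsWithin_insert]
      rw [hfeq, tendsto_sup]
      constructor
      · simpa [hD0] using tendsto_pure_nhds (derivWithin (Ph m φ w) (odeDom ρ)) 0
      · apply Filter.Tendsto.congr' _ hElim
        filter_upwards [self_mem_nhdsWithin] with t ht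
        have ht0 : 0 < t := lt_of_le_of_ne ht.1.1 (fun hh => ht.2 hh.symm)
        exact (hDs t ht0 ht.1.2).symm
    · have cE : ContinuousWithinAt (fun t => φ (w t) - (m-1) / t * Ph m φ w t)
          (odeDom ρ) s := by
        apply ContinuousWithinAt.sub
        · exact (h.contOn.comp hwc (fun t ht => hwpos t ht)) s hs
        · apply ContinuousWithinAt.mul
          · exact (continuousAt_const.div continuousAt_id (ne_of_gt h0)).continuousWithinAt
          · exact hPhc s hs
      apply cE.congr_of_eventuallyEq ?_ (hDs s h0 hs.2)
      filter_upwards [self_mem_nhdsWithin,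
        mem_nhdsWithin_of_mem_nhds (isOpen_Ioi.mem_nhds h0)] with t ht1 ht2
      exact hDs t ht2 ht1.2
  -- differentiability of Ph w on the domain
  have hdiffPh : DifferentiableOn ℝ (Ph m φ w) (odeDom ρ) := by
    intro t ht
    rcases eq_or_lt_of_le ht.1 with h0 | h0
    · rw [← h0]
      exact K3.differentiableWithinAt
    · exact (K4 t h0 ht.2).differentiableAt.differentiableWithinAt
  -- Ph w is C¹ on the domain
  have hPh_C1 : ContDiffOn ℝ 1 (Ph m φ w) (odeDom ρ) := by
    have h1 : ContDiffOn ℝ ((0:ℕ)+1) (Ph m φ w) (odeDom ρ) := by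
      apply (contDiffOn_succ_iff_derivWithin hUD).2
      refine ⟨hdiffPh, by simp, ?_⟩
      rw [show ((0:ℕ) : WithTop ℕ∞) = 0 by norm_num, contDiffOn_zero]
      exact hDcont
    exact_mod_cast h1
  -- derivWithin of u
  have hdu0 : derivWithin u (odeDom ρ) 0 = 0 := K2.derivWithin (hUD 0 h0mem)
  have hdus : ∀ s : ℝ, 0 < s → ENNReal.ofReal s < ρ →
      derivWithin u (odeDom ρ) s = Ph m φ w s := by
    intro s hs0 hsρ
    rw [derivWithin_of_mem_nhds (odeDom_mem_nhds hs0 hsρ)]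
    exact (K1 s hs0 hsρ).deriv
  have hduEq : EqOn (derivWithin u (odeDom ρ)) (Ph m φ w) (odeDom ρ) := by
    intro t ht
    rcases eq_or_lt_of_le ht.1 with h0 | h0
    · rw [← h0, hdu0, Ph_zero h]
    · exact hdus t h0 ht.2
  have hdiffu : DifferentiableOn ℝ u (odeDom ρ) := by
    intro t ht
    rcases eq_or_lt_of_le ht.1 with h0 | h0
    · rw [← h0]
      exact K2.differentiableWithinAt
    · exact (K1 t h0 ht.2).differentiableAt.differentiableWithinAt
  -- u is C² on the domain
  have hC2 : ContDiffOn ℝ 2 u (odeDom ρ) := by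
    have h2 : ContDiffOn ℝ ((1:ℕ)+1) u (odeDom ρ) := by
      apply (contDiffOn_succ_iff_derivWithin hUD).2
      refine ⟨hdiffu, by simp, ?_⟩
      have : ContDiffOn ℝ (1 : WithTop ℕ∞) (Ph m φ w) (odeDom ρ) := by exact_mod_cast hPh_C1
      exact this.congr hduEq
    exact_mod_cast h2
  -- assemble
  refine ⟨hC2, ?_, PT_zero, ?_, ?_⟩
  · intro r hr
    have h1 := hwb r hr
    rw [hfix r hr] at h1
    exact le_trans hb h1
  · rw [derivWithin_congr_set ((odeDom_eventuallyEq_Ici hρ).symm), hdu0]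
  · intro r hr0 hrρ
    have hd1 : deriv u r = Ph m φ w r := (K1 r hr0 hrρ).deriv
    have hd2 : deriv (deriv u) r = deriv (Ph m φ w) r := by
      apply Filter.EventuallyEq.deriv_eq
      obtain ⟨r'', hrr'', hr''ρ⟩ := exists_upper hr0.le hrρ
      filter_upwards [Ioo_mem_nhds hr0 hrr''] with s hs
      exact (K1 s hs.1 (lt_of_le_of_lt (ENNReal.ofReal_le_ofReal hs.2.le) hr''ρ)).deriv
    have hd3 : deriv (Ph m φ w) r = φ (w r) - (m-1) / r * Ph m φ w r := (K4 r hr0 hrρ).deriv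
    rw [hd2, hd3, hd1]
    have huw : u r = w r := (hfix r ⟨hr0.le, hrρ⟩).symm
    rw [huw]
    ring


theorem exists_sol_of_super (h : PhiOK m φ) {b : ℝ} (hb : 0 ≤ b) {ρ : ℝ≥0∞} (hρ : 0 < ρ)
    {S : ℝ → ℝ} (hSc : ContinuousOn S (odeDom ρ)) (hSb : ∀ r ∈ odeDom ρ, b ≤ S r)
    (hsuper : ∀ r ∈ odeDom ρ, PT m φ b S r ≤ S r) :
    ∃ u : ℝ → ℝ, IsSolOn m φ b ρ u := by
  classical
  set T : (ℝ → ℝ) → (ℝ → ℝ) := fun v => PT m φ b v with hT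
  set seq : ℕ → ℝ → ℝ := fun n => T^[n] S with hseq
  have hseq0 : seq 0 = S := rfl
  have hseqS : ∀ n, seq (n+1) = T (seq n) := by
    intro n
    rw [hseq]
    simp only
    rw [Function.iterate_succ_apply']
  -- the main induction
  have main : ∀ n, ContinuousOn (seq n) (odeDom ρ) ∧
      (∀ r ∈ odeDom ρ, b ≤ seq n r ∧ seq n r ≤ S r) ∧
      (∀ r ∈ odeDom ρ, seq (n+1) r ≤ seq n r) := by
    intro n
    induction n with
    | zero =>
      refine ⟨hSc, fun r hr => ⟨hSb r hr, le_rfl⟩, fun r hr => ?_⟩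
      rw [hseqS 0, hseq0]
      exact hsuper r hr
    | succ n ih =>
      obtain ⟨ihc, ihb, ihd⟩ := ih
      have hC : ContinuousOn (seq (n+1)) (odeDom ρ) := by
        rw [hseqS n]
        apply contOn_odeDom_of_Icc hρ
        intro r' hr'0 hr'ρ
        have hsub : Icc 0 r' ⊆ odeDom ρ := Icc_subset_odeDom hr'ρ
        have hc : ContinuousOn (seq n) (Icc 0 r') := ihc.mono hsub
        have h0 : ∀ t ∈ Icc (0:ℝ) r', 0 ≤ seq n t :=
          fun t ht => le_trans hb (ihb t (hsub ht)).1
        obtain ⟨M, hM0, hM⟩ := exists_bound hr'0.le hc h0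
        exact PT_contOn h hr'0.le hc h0 hM0 hM
      refine ⟨hC, fun r hr => ⟨?_, ?_⟩, fun r hr => ?_⟩
      · rw [hseqS n]
        have hsub : Icc 0 r ⊆ odeDom ρ := Icc_subset_odeDom hr.2
        exact PT_ge h (fun t ht => le_trans hb (ihb t (hsub ht)).1) ⟨hr.1, le_rfl⟩
      · exact le_trans (ihd r hr) (ihb r hr).2
      · have hsub : Icc 0 r ⊆ odeDom ρ := Icc_subset_odeDom hr.2
        have hc1 : ContinuousOn (seq (n+1)) (Icc 0 r) := hC.mono hsub
        have hc0 : ContinuousOn (seq n) (Icc 0 r) := ihc.mono hsub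
        have h0 : ∀ t ∈ Icc (0:ℝ) r, 0 ≤ seq (n+1) t := by
          intro t ht
          have := congrFun (hseqS n) t
          rw [this]
          exact le_trans hb (PT_ge h
            (fun t' ht' => le_trans hb (ihb t' (hsub ⟨ht'.1, le_trans ht'.2 ht.2⟩)).1)
            ⟨ht.1, le_rfl⟩)
        have e1 : seq (n+1+1) r = PT m φ b (seq (n+1)) r := congrFun (hseqS (n+1)) r
        have e2 : seq (n+1) r = PT m φ b (seq n) r := congrFun (hseqS n) r
        rw [e1]
        calc PT m φ b (seq (n+1)) r ≤ PT m φ b (seq n) r :=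
              PT_mono_v h hc1 h0 hc0 (fun t ht => ihd t (hsub ht)) ⟨hr.1, le_rfl⟩
          _ = seq (n+1) r := e2.symm
  -- the limit function
  set w : ℝ → ℝ := fun t => ⨅ n, seq n t with hwdef
  have hanti : ∀ t ∈ odeDom ρ, Antitone (fun n => seq n t) := by
    intro t ht
    apply antitone_nat_of_succ_le
    intro n
    exact (main n).2.2 t ht
  have hbdd : ∀ t ∈ odeDom ρ, BddBelow (range (fun n => seq n t)) := by
    intro t ht
    refine ⟨b, ?_⟩
    rintro x ⟨n, rfl⟩
    exact ((main n).2.1 t ht).1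
  have hwlim : ∀ t ∈ odeDom ρ, Tendsto (fun n => seq n t) atTop (𝓝 (w t)) :=
    fun t ht => tendsto_atTop_ciInf (hanti t ht) (hbdd t ht)
  have hwb : ∀ t ∈ odeDom ρ, b ≤ w t := by
    intro t ht
    exact le_ciInf (fun n => ((main n).2.1 t ht).1)
  have hwS : ∀ t ∈ odeDom ρ, w t ≤ S t := by
    intro t ht
    exact ciInf_le_of_le (hbdd t ht) 0 (by rw [hseq0])
  have hφlim : ∀ t ∈ odeDom ρ, Tendsto (fun n => φ (seq n t)) atTop (𝓝 (φ (w t))) := by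
    intro t ht
    have h1 : Tendsto (fun n => seq n t) atTop (𝓝[Ici 0] (w t)) := by
      rw [tendsto_nhdsWithin_iff]
      exact ⟨hwlim t ht, Filter.Eventually.of_forall
        (fun n => le_trans hb ((main n).2.1 t ht).1)⟩
    exact ((h.contOn (w t) (le_trans hb (hwb t ht))).tendsto.comp h1)
  -- inner convergence
  have hPintlim : ∀ s ∈ odeDom ρ, Tendsto (fun n => Pint m φ (seq n) s) atTop
      (𝓝 (Pint m φ w s)) := by
    intro s hs
    have hsub : Icc 0 s ⊆ odeDom ρ := Icc_subset_odeDom hs.2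
    obtain ⟨M, hM0, hM⟩ := exists_bound hs.1 (hSc.mono hsub)
      (fun t ht => le_trans hb (hSb t (hsub ht)))
    unfold Pint
    simp_rw [intervalIntegral.integral_of_le hs.1]
    apply MeasureTheory.tendsto_integral_of_dominated_convergence
      (fun t => t ^ (m-1) * φ M)
    · intro n
      have hc : ContinuousOn (seq n) (Icc 0 s) := (main n).1.mono hsub
      have h0 : ∀ t ∈ Icc (0:ℝ) s, 0 ≤ seq n t :=
        fun t ht => le_trans hb ((main n).2.1 t (hsub ht)).1
      exact ((integrand_contOn h hc h0).mono Ioc_subset_Icc_self).aestronglyMeasurable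
        measurableSet_Ioc
    · exact ((cont_rpow_exp h.hm1).mul continuous_const).integrableOn_Ioc
    · intro n
      rw [ae_restrict_iff' measurableSet_Ioc]
      apply ae_of_all
      intro t ht
      have htm : t ∈ Icc (0:ℝ) s := ⟨ht.1.le, ht.2⟩
      have h1 : 0 ≤ seq n t := le_trans hb ((main n).2.1 t (hsub htm)).1
      have h2 : seq n t ≤ M := le_trans ((main n).2.1 t (hsub htm)).2 (hM t htm)
      rw [Real.norm_eq_abs, abs_of_nonneg (integrand_nonneg h
        (fun t' ht' => le_trans hb ((main n).2.1 t' (hsub ht')).1) t htm)]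
      exact mul_le_mul_of_nonneg_left (h.mono h1 hM0 h2) (Real.rpow_nonneg ht.1.le _)
    · rw [ae_restrict_iff' measurableSet_Ioc]
      apply ae_of_all
      intro t ht
      have htm : t ∈ Icc (0:ℝ) s := ⟨ht.1.le, ht.2⟩
      exact tendsto_const_nhds.mul (hφlim t (hsub htm))
  -- outer convergence: PT of the iterates converges to PT of w
  have hPTlim : ∀ r ∈ odeDom ρ, Tendsto (fun n => PT m φ b (seq n) r) atTop
      (𝓝 (PT m φ b w r)) := by
    intro r hr
    have hsub : Icc 0 r ⊆ odeDom ρ := Icc_subset_odeDom hr.2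
    obtain ⟨M, hM0, hM⟩ := exists_bound hr.1 (hSc.mono hsub)
      (fun t ht => le_trans hb (hSb t (hsub ht)))
    unfold PT
    apply Tendsto.const_add
    simp_rw [intervalIntegral.integral_of_le hr.1]
    apply MeasureTheory.tendsto_integral_of_dominated_convergence
      (fun s => φ M / m * s)
    · intro n
      have hc : ContinuousOn (seq n) (Icc 0 r) := (main n).1.mono hsub
      have h0 : ∀ t ∈ Icc (0:ℝ) r, 0 ≤ seq n t :=
        fun t ht => le_trans hb ((main n).2.1 t (hsub ht)).1
      have hMn : ∀ t ∈ Icc (0:ℝ) r, seq n t ≤ M :=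
        fun t ht => le_trans ((main n).2.1 t (hsub ht)).2 (hM t ht)
      exact ((Ph_contOn h hr.1 hc h0 hM0 hMn).mono Ioc_subset_Icc_self).aestronglyMeasurable
        measurableSet_Ioc
    · exact (continuous_const.mul continuous_id).integrableOn_Ioc
    · intro n
      rw [ae_restrict_iff' measurableSet_Ioc]
      apply ae_of_all
      intro s hsm
      have hsmm : s ∈ Icc (0:ℝ) r := ⟨hsm.1.le, hsm.2⟩
      have hc : ContinuousOn (seq n) (Icc 0 r) := (main n).1.mono hsub
      have h0 : ∀ t ∈ Icc (0:ℝ) r, 0 ≤ seq n t :=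
        fun t ht => le_trans hb ((main n).2.1 t (hsub ht)).1
      have hMn : ∀ t ∈ Icc (0:ℝ) r, seq n t ≤ M :=
        fun t ht => le_trans ((main n).2.1 t (hsub ht)).2 (hM t ht)
      rw [Real.norm_eq_abs, abs_of_nonneg (Ph_nonneg h h0 hsmm)]
      exact Ph_le h hc h0 hM0 hMn hsmm
    · rw [ae_restrict_iff' measurableSet_Ioc]
      apply ae_of_all
      intro s hsm
      have hsmm : s ∈ Icc (0:ℝ) r := ⟨hsm.1.le, hsm.2⟩
      unfold Ph
      exact tendsto_const_nhds.mul (hPintlim s (hsub hsmm))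
  -- the fixed point identity
  have hfix : ∀ r ∈ odeDom ρ, w r = PT m φ b w r := by
    intro r hr
    have h1 : Tendsto (fun n => seq (n+1) r) atTop (𝓝 (w r)) :=
      (hwlim r hr).comp (tendsto_add_atTop_nat 1)
    have h2 : Tendsto (fun n => seq (n+1) r) atTop (𝓝 (PT m φ b w r)) := by
      have : (fun n => seq (n+1) r) = fun n => PT m φ b (seq n) r := by
        funext n
        rw [hseqS n]
      rw [this]
      exact hPTlim r hr
    exact tendsto_nhds_unique h1 h2
  -- continuity of w on the domain
  have hwc : ContinuousOn w (odeDom ρ) := by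
    have hPTc : ContinuousOn (PT m φ b w) (odeDom ρ) := by
      apply contOn_odeDom_of_Icc hρ
      intro r' hr'0 hr'ρ
      have hsub : Icc 0 r' ⊆ odeDom ρ := Icc_subset_odeDom hr'ρ
      obtain ⟨M, hM0, hM⟩ := exists_bound hr'0.le (hSc.mono hsub)
        (fun t ht => le_trans hb (hSb t (hsub ht)))
      -- measurability of the inner integrand for w
      have hFmeas : AEStronglyMeasurable (fun t => t ^ (m-1) * φ (w t))
          (volume.restrict (Ioc 0 r')) := by
        apply aestronglyMeasurable_of_tendsto_ae (u := atTop)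
          (f := fun n => fun t => t ^ (m-1) * φ (seq n t))
        · intro n
          have hc : ContinuousOn (seq n) (Icc 0 r') := (main n).1.mono hsub
          have h0 : ∀ t ∈ Icc (0:ℝ) r', 0 ≤ seq n t :=
            fun t ht => le_trans hb ((main n).2.1 t (hsub ht)).1
          exact ((integrand_contOn h hc h0).mono Ioc_subset_Icc_self).aestronglyMeasurable
            measurableSet_Ioc
        · rw [ae_restrict_iff' measurableSet_Ioc]
          apply ae_of_all
          intro t ht
          exact tendsto_const_nhds.mul (hφlim t (hsub ⟨ht.1.le, ht.2⟩))
      have hFint : IntegrableOn (fun t => t ^ (m-1) * φ (w t)) (Ioc 0 r') := by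
        apply Integrable.mono' (((cont_rpow_exp h.hm1).mul
          continuous_const).integrableOn_Ioc) hFmeas
        rw [ae_restrict_iff' measurableSet_Ioc]
        apply ae_of_all
        intro t ht
        have htm : t ∈ Icc (0:ℝ) r' := ⟨ht.1.le, ht.2⟩
        have h1 : 0 ≤ w t := le_trans hb (hwb t (hsub htm))
        have h2 : w t ≤ M := le_trans (hwS t (hsub htm)) (hM t htm)
        rw [Real.norm_eq_abs, abs_of_nonneg (mul_nonneg (Real.rpow_nonneg ht.1.le _)
          (h.nonneg _ h1))]
        exact mul_le_mul_of_nonneg_left (h.mono h1 hM0 h2) (Real.rpow_nonneg ht.1.le _)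
      have hFintIcc : IntegrableOn (fun t => t ^ (m-1) * φ (w t)) (Icc 0 r') :=
        (integrableOn_Icc_iff_integrableOn_Ioc).2 hFint
      -- Pint w is continuous
      have hPintc : ContinuousOn (Pint m φ w) (Icc 0 r') := by
        have := intervalIntegral.continuousOn_primitive_interval
          (f := fun t => t ^ (m-1) * φ (w t)) (μ := volume) (a := (0:ℝ)) (b := r')
          (by rwa [uIcc_of_le hr'0.le])
        rwa [uIcc_of_le hr'0.le] at this
      -- bounds on Pint w via limits
      have hPintb : ∀ s ∈ Icc (0:ℝ) r', 0 ≤ Pint m φ w s ∧ Pint m φ w s ≤ φ M * (s ^ m / m) := by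
        intro s hsm
        have hlim := hPintlim s (hsub hsm)
        constructor
        · apply ge_of_tendsto hlim
          apply Filter.Eventually.of_forall
          intro n
          exact Pint_nonneg h (fun t ht => le_trans hb ((main n).2.1 t
            (hsub ⟨ht.1, le_trans ht.2 hsm.2⟩)).1) (⟨hsm.1, le_rfl⟩ : s ∈ Icc 0 s)
        · apply le_of_tendsto hlim
          apply Filter.Eventually.of_forall
          intro n
          have hc : ContinuousOn (seq n) (Icc 0 r') := (main n).1.mono hsub
          have h0 : ∀ t ∈ Icc (0:ℝ) r', 0 ≤ seq n t :=
            fun t ht => le_trans hb ((main n).2.1 t (hsub ht)).1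
          have hMn : ∀ t ∈ Icc (0:ℝ) r', seq n t ≤ M :=
            fun t ht => le_trans ((main n).2.1 t (hsub ht)).2 (hM t ht)
          exact Pint_le h hc h0 hM0 hMn hsm
      -- Ph w is continuous
      have hPhwb : ∀ s ∈ Icc (0:ℝ) r', 0 ≤ Ph m φ w s ∧ Ph m φ w s ≤ φ M / m * s := by
        intro s hsm
        rcases eq_or_lt_of_le hsm.1 with h0 | h0
        · rw [← h0, Ph_zero h]
          exact ⟨le_rfl, by simp⟩
        constructor
        · exact mul_nonneg (Real.rpow_nonneg hsm.1 _) (hPintb s hsm).1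
        · have h1 : Ph m φ w s ≤ s ^ (1-m) * (φ M * (s ^ m / m)) :=
            mul_le_mul_of_nonneg_left (hPintb s hsm).2 (Real.rpow_nonneg hsm.1 _)
          have h2 : s ^ (1-m) * s ^ m = s := by
            rw [← Real.rpow_add h0, show 1 - m + m = 1 by ring, Real.rpow_one]
          calc Ph m φ w s ≤ s ^ (1-m) * (φ M * (s ^ m / m)) := h1
            _ = (s ^ (1-m) * s ^ m) * φ M / m := by ring
            _ = φ M / m * s := by rw [h2]; ring
      have hPhwc : ContinuousOn (Ph m φ w) (Icc 0 r') := by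
        intro s hsm
        rcases eq_or_lt_of_le hsm.1 with h0 | h0
        · rw [← h0, ContinuousWithinAt, Ph_zero h]
          have hbnd : ∀ᶠ t in 𝓝[Icc 0 r'] (0:ℝ), ‖Ph m φ w t‖ ≤ φ M / m * t := by
            filter_upwards [self_mem_nhdsWithin] with t ht
            rw [Real.norm_eq_abs, abs_of_nonneg (hPhwb t ht).1]
            exact (hPhwb t ht).2
          have hg : Tendsto (fun t : ℝ => φ M / m * t) (𝓝[Icc 0 r'] (0:ℝ)) (𝓝 0) := by
            have : Tendsto (fun t : ℝ => φ M / m * t) (𝓝 (0:ℝ)) (𝓝 (φ M / m * 0)) :=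
              (continuous_const.mul continuous_id).tendsto 0
            rw [mul_zero] at this
            exact this.mono_left nhdsWithin_le_nhds
          exact squeeze_zero_norm' hbnd hg
        · apply ContinuousWithinAt.mul
          · exact (Real.continuousAt_rpow_const s (1-m) (Or.inl (ne_of_gt h0))).continuousWithinAt
          · exact hPintc s hsm
      -- finally PT b w is continuous
      apply ContinuousOn.add continuousOn_const
      have := intervalIntegral.continuousOn_primitive_interval
        (f := Ph m φ w) (μ := volume) (a := (0:ℝ)) (b := r')
        (by rw [uIcc_of_le hr'0.le]
            exact hPhwc.integrableOn_compact isCompact_Icc)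
      rwa [uIcc_of_le hr'0.le] at this
    exact hPTc.congr (fun r hr => hfix r hr)
  exact ⟨PT m φ b w, sol_of_fixedpoint h hb hρ hwc hwb hfix⟩

end Exists

section Cors

variable {m : ℝ} {φ : ℝ → ℝ}

lemma IsSolOn.restrict {b : ℝ} {R R' : ℝ≥0∞} {u : ℝ → ℝ} (hu : IsSolOn m φ b R u)
    (hR' : R' ≤ R) : IsSolOn m φ b R' u := by
  have hsub : odeDom R' ⊆ odeDom R := fun t ht => ⟨ht.1, lt_of_lt_of_le ht.2 hR'⟩
  exact ⟨hu.1.mono hsub, fun r hr => hu.2.1 r (hsub hr), hu.2.2.1, hu.2.2.2.1,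
    fun r hr0 hrR => hu.2.2.2.2 r hr0 (lt_of_lt_of_le hrR hR')⟩

lemma le_maxRadius (h : PhiOK m φ) {b : ℝ} {ρ : ℝ≥0∞} (hρ : 0 < ρ)
    (hex : ∃ u, IsSolOn m φ b ρ u) : ρ ≤ maxRadius m φ b :=
  le_sSup ⟨hρ, hex⟩

/-- Existence for a smaller initial value on the same interval. -/
lemma exists_sol_le (h : PhiOK m φ) {a b : ℝ} (hb : 0 ≤ b) (hba : b ≤ a)
    {R : ℝ≥0∞} (hR : 0 < R) {u : ℝ → ℝ} (hu : IsSolOn m φ a R u) :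
    ∃ v, IsSolOn m φ b R v := by
  apply exists_sol_of_super h hb hR hu.1.continuousOn
  · intro r hr
    have h1 : a ≤ u r := by
      have := sol_mono h hR hu (le_rfl : (0:ℝ) ≤ 0) hr.1 hr.2
      rwa [hu.2.2.1] at this
    linarith
  · intro r hr
    have he := sol_eq_PT h hR hu r hr.1 hr.2
    unfold PT at he ⊢
    have h1 : a ≤ u r := by
      have := sol_mono h hR hu (le_rfl : (0:ℝ) ≤ 0) hr.1 hr.2
      rwa [hu.2.2.1] at this
    linarith [he.le, he.ge]

lemma maxRadius_antitone (h : PhiOK m φ) {a b : ℝ} (hb : 0 ≤ b) (hba : b ≤ a) :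
    maxRadius m φ a ≤ maxRadius m φ b := by
  apply sSup_le
  rintro R ⟨hR, u, hu⟩
  exact le_sSup ⟨hR, exists_sol_le h hb hba hR hu⟩

lemma maxRadius_top_of_phi_zero (h : PhiOK m φ) {b : ℝ} (hb : 0 ≤ b) (hφb : φ b = 0) :
    maxRadius m φ b = ⊤ := by
  have hex : ∃ u, IsSolOn m φ b ⊤ u := by
    apply exists_sol_of_super h hb ENNReal.zero_lt_top (S := fun _ => b) continuousOn_const
    · intro r _
      exact le_rfl
    · intro r _
      unfold PT Ph Pint
      simp [hφb]
  exact eq_top_iff.2 (le_maxRadius h ENNReal.zero_lt_top hex)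

/-- Existence by shifting an existing solution. -/
lemma exists_sol_shift (h : PhiOK m φ) {b c r2 : ℝ} {R ρ : ℝ≥0∞} {u : ℝ → ℝ}
    (hR : 0 < R) (hu : IsSolOn m φ b R u) (hr2 : 0 ≤ r2) (hr2R : ENNReal.ofReal r2 < R)
    (hc : 0 ≤ c) (hcu : c ≤ u r2) (hρ : 0 < ρ)
    (hρR : ∀ r : ℝ, 0 ≤ r → ENNReal.ofReal r < ρ → ENNReal.ofReal (r2 + r) < R) :
    ∃ v, IsSolOn m φ c ρ v := by
  apply exists_sol_of_super h hc hρ (S := fun s => u (r2 + s))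
  · apply hu.1.continuousOn.comp (continuous_const.add continuous_id).continuousOn
    intro t ht
    simp only [Pi.add_apply, id_eq]
    exact ⟨by linarith [ht.1], hρR t ht.1 ht.2⟩
  · intro r hr
    calc c ≤ u r2 := hcu
      _ ≤ u (r2 + r) := sol_mono h hR hu hr2 (by linarith [hr.1]) (hρR r hr.1 hr.2)
  · intro r hr
    have key := sol_shift_super h hR hu hr2 hr.1 (hρR r hr.1 hr.2)
    have hmono : PT m φ c (fun s => u (r2 + s)) r ≤ PT m φ (u r2) (fun s => u (r2 + s)) r := by
      unfold PT
      linarith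
    exact le_trans hmono key

/-- Existence via the exponential supersolution, when `φ a = 0`. -/
lemma exists_sol_exp (h : PhiOK m φ) {a b δ T K : ℝ}
    (ha : 0 ≤ a) (hδ : 0 < δ) (hK : 0 < K)
    (hlin : ∀ t ∈ Icc a (a+δ), φ t ≤ K * (t - a))
    (hab : a < b) (hT : 0 < T)
    (hsmall : (b - a) * Real.exp (K * T^2 / (2*m)) ≤ δ) :
    ∃ v, IsSolOn m φ b (ENNReal.ofReal T) v := by
  set S : ℝ → ℝ := fun r => a + (b - a) * Real.exp (K * r^2 / (2*m)) with hSdef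
  have hba : 0 < b - a := by linarith
  have hb' : 0 ≤ b := by linarith
  have hm0 : (0:ℝ) < m := h.hm0
  have h2m : (0:ℝ) < 2*m := by linarith
  have hargmono : ∀ {x y : ℝ}, 0 ≤ x → x ≤ y →
      Real.exp (K * x^2/(2*m)) ≤ Real.exp (K * y^2/(2*m)) := by
    intro x y hx hxy
    apply Real.exp_le_exp.2
    apply (div_le_div_iff_of_pos_right h2m).2
    apply mul_le_mul_of_nonneg_left _ hK.le
    exact pow_le_pow_left₀ hx hxy 2
  have hexp1 : ∀ {x : ℝ}, (1:ℝ) ≤ Real.exp (K * x^2/(2*m)) := by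
    intro x
    apply Real.one_le_exp
    positivity
  have hScont : Continuous S := by
    apply continuous_const.add
    apply continuous_const.mul
    exact Real.continuous_exp.comp ((continuous_const.mul (continuous_pow 2)).div_const (2*m))
  have hdomT : ∀ {r : ℝ}, r ∈ odeDom (ENNReal.ofReal T) → 0 ≤ r ∧ r < T := by
    intro r hr
    exact ⟨hr.1, (ENNReal.ofReal_lt_ofReal_iff hT).1 hr.2⟩
  have hSrange : ∀ {t : ℝ}, 0 ≤ t → t ≤ T → S t ∈ Icc a (a+δ) := by
    intro t ht0 htT
    constructor
    · have := hexp1 (x := t)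
      simp only [hSdef]
      nlinarith
    · have h1 : Real.exp (K * t^2/(2*m)) ≤ Real.exp (K * T^2/(2*m)) := hargmono ht0 htT
      simp only [hSdef]
      nlinarith
  apply exists_sol_of_super h hb' (ENNReal.ofReal_pos.2 hT) (S := S)
  · exact hScont.continuousOn
  · intro r hr
    have h1 := hexp1 (x := r)
    simp only [hSdef]
    nlinarith
  · -- the supersolution inequality
    intro r hr
    obtain ⟨hr0, hrT⟩ := hdomT hr
    have hSc' : ContinuousOn S (Icc 0 r) := hScont.continuousOn
    have hSp : ∀ t ∈ Icc (0:ℝ) r, 0 ≤ S t := by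
      intro t ht
      have := (hSrange ht.1 (by linarith [ht.2])).1
      linarith
    -- pointwise bound on Ph S
    have hPh_bd : ∀ s ∈ Icc (0:ℝ) r, Ph m φ S s ≤
        K * (b-a) / m * (s * Real.exp (K * s^2/(2*m))) := by
      intro s hsm
      have hsub : Icc (0:ℝ) s ⊆ Icc 0 r := Icc_subset_Icc le_rfl hsm.2
      have hPint : Pint m φ S s ≤ K * (b-a) * Real.exp (K * s^2/(2*m)) * (s^m / m) := by
        have h1 : Pint m φ S s ≤
            ∫ t in (0:ℝ)..s, t ^ (m-1) * (K * (b-a) * Real.exp (K * s^2/(2*m))) := by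
          apply intervalIntegral.integral_mono_on hsm.1
          · exact ((integrand_contOn h (hSc'.mono hsub) (fun t ht => hSp t (hsub ht)))).intervalIntegrable_of_Icc hsm.1
          · exact (((cont_rpow_exp h.hm1).mul continuous_const).continuousOn).intervalIntegrable_of_Icc hsm.1
          · intro t ht
            apply mul_le_mul_of_nonneg_left _ (Real.rpow_nonneg ht.1 _)
            have htr : S t ∈ Icc a (a+δ) := hSrange ht.1 (by linarith [ht.2, hsm.2])
            calc φ (S t) ≤ K * (S t - a) := hlin (S t) htr
              _ = K * ((b-a) * Real.exp (K * t^2/(2*m))) := by simp only [hSdef]; ring_nf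
              _ ≤ K * ((b-a) * Real.exp (K * s^2/(2*m))) := by
                  apply mul_le_mul_of_nonneg_left _ hK.le
                  exact mul_le_mul_of_nonneg_left (hargmono ht.1 ht.2) hba.le
              _ = K * (b-a) * Real.exp (K * s^2/(2*m)) := by ring
        rwa [intervalIntegral.integral_mul_const, integral_rpow_exp h hsm.1, mul_comm] at h1
      rcases eq_or_lt_of_le hsm.1 with h0 | h0
      · rw [← h0, Ph_zero h]
        positivity
      · have e2 : s ^ (1-m) * s ^ m = s := by
          rw [← Real.rpow_add h0, show 1-m+m = (1:ℝ) by ring, Real.rpow_one]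
        have h3 : Ph m φ S s ≤ s ^ (1-m) * (K * (b-a) * Real.exp (K * s^2/(2*m)) * (s^m/m)) :=
          mul_le_mul_of_nonneg_left hPint (Real.rpow_nonneg hsm.1 _)
        calc Ph m φ S s ≤ s ^ (1-m) * (K * (b-a) * Real.exp (K * s^2/(2*m)) * (s^m/m)) := h3
          _ = (s ^ (1-m) * s ^ m) * (K * (b-a) * Real.exp (K * s^2/(2*m))) / m := by ring
          _ = K * (b-a) / m * (s * Real.exp (K * s^2/(2*m))) := by rw [e2]; ring
    -- integrate the bound
    obtain ⟨M, hM0, hM⟩ := exists_bound hr0 hSc' hSp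
    have hPhc : ContinuousOn (Ph m φ S) (Icc 0 r) := Ph_contOn h hr0 hSc' hSp hM0 hM
    have hint2 : IntervalIntegrable
        (fun s => K * (b-a) / m * (s * Real.exp (K * s^2/(2*m)))) volume 0 r := by
      apply Continuous.intervalIntegrable
      apply continuous_const.mul
      exact continuous_id.mul (Real.continuous_exp.comp
        ((continuous_const.mul (continuous_pow 2)).div_const (2*m)))
    have hstep : (∫ s in (0:ℝ)..r, Ph m φ S s) ≤
        ∫ s in (0:ℝ)..r, K * (b-a) / m * (s * Real.exp (K * s^2/(2*m))) := by
      apply intervalIntegral.integral_mono_on hr0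
      · exact hPhc.intervalIntegrable_of_Icc hr0
      · exact hint2
      · exact hPh_bd
    have hFTC : (∫ s in (0:ℝ)..r, K * (b-a) / m * (s * Real.exp (K * s^2/(2*m))))
        = (b-a) * Real.exp (K * r^2/(2*m)) - (b-a) := by
      have hder : ∀ s ∈ uIcc (0:ℝ) r, HasDerivAt
          (fun x => (b-a) * Real.exp (K * x^2/(2*m)))
          (K * (b-a) / m * (s * Real.exp (K * s^2/(2*m)))) s := by
        intro s _
        have h1 : HasDerivAt (fun x : ℝ => K * x^2/(2*m)) (K * (2*s)/(2*m)) s := by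
          have h2 : HasDerivAt (fun x : ℝ => x^2) (2*s) s := by
            simpa using hasDerivAt_pow 2 s
          exact (h2.const_mul K).div_const (2*m)
        have h3 := (h1.exp).const_mul (b-a)
        have e : K * (b-a) / m * (s * Real.exp (K * s^2/(2*m))) =
            (b-a) * (Real.exp (K * s^2/(2*m)) * (K * (2*s)/(2*m))) := by ring
        rw [e]
        exact h3
      have := intervalIntegral.integral_eq_sub_of_hasDerivAt hder hint2
      rw [this]
      simp
    unfold PT
    have hfin : b + (∫ s in (0:ℝ)..r, Ph m φ S s) ≤
        b + ((b-a) * Real.exp (K * r^2/(2*m)) - (b-a)) := by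
      rw [← hFTC]
      linarith
    calc b + (∫ s in (0:ℝ)..r, Ph m φ S s)
        ≤ b + ((b-a) * Real.exp (K * r^2/(2*m)) - (b-a)) := hfin
      _ = a + (b-a) * Real.exp (K * r^2/(2*m)) := by ring
      _ = S r := rfl

end Cors

/-- continuity of the maximal existence radius in the initial value. -/
theorem maxRadius_continuous
    (m : ℝ) (hm : 2 < m)
    (φ : ℝ → ℝ) (hφ0 : φ 0 = 0)
    (hφmono : MonotoneOn φ (Set.Ici 0))
    (hφnonneg : ∀ t : ℝ, 0 ≤ t → 0 ≤ φ t)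
    (hφlip : ∀ x ∈ Set.Ici (0 : ℝ), ∃ K : NNReal, ∃ s ∈ nhdsWithin x (Set.Ici 0),
      LipschitzOnWith K φ s)
 :
    ∀ a : ℝ, 0 ≤ a →
      Tendsto (fun b : ℝ => maxRadius m φ b) (nhdsWithin a (Set.Ici 0))
        (nhds (maxRadius m φ a)) := by
  intro a ha
  have h : PhiOK m φ := ⟨hm, hφ0, hφmono, hφnonneg, hφlip⟩
  rw [tendsto_order]
  constructor
  · -- lower semicontinuity
    intro c hc
    obtain ⟨R, hRmem, hcR⟩ := lt_sSup_iff.1 hc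
    obtain ⟨hRpos, u, hu⟩ := hRmem
    by_cases hφa : φ a = 0
    · -- case φ a = 0 : the radius is infinite at a
      have hcne : c ≠ ⊤ := by
        have hRtop : c < ⊤ := lt_of_lt_of_le hcR le_top
        exact hRtop.ne
      set ρ : ℝ := c.toReal + 1 with hρdef
      have hρpos : 0 < ρ := by positivity
      have hcρ : c < ENNReal.ofReal ρ := by
        rw [← ENNReal.ofReal_toReal hcne]
        exact (ENNReal.ofReal_lt_ofReal_iff hρpos).2 (by simp [hρdef])
      -- Lipschitz data at a
      obtain ⟨K₀, sset, hsmem, hKlip⟩ := h.lip a (mem_Ici.2 ha)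
      rw [Metric.mem_nhdsWithin_iff] at hsmem
      obtain ⟨δ₀, hδ₀, hδsub⟩ := hsmem
      set δ : ℝ := δ₀/2 with hδdef
      have hδpos : 0 < δ := by positivity
      set K : ℝ := (K₀ : ℝ) + 1 with hKdef
      have hK : 0 < K := by positivity
      have hlin : ∀ t ∈ Icc a (a+δ), φ t ≤ K * (t - a) := by
        intro t ht
        have hts : t ∈ sset := by
          apply hδsub
          constructor
          · rw [Metric.mem_ball, Real.dist_eq, abs_of_nonneg (by linarith [ht.1])]
            have : t - a ≤ δ := by linarith [ht.2]
            linarith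
          · exact mem_Ici.2 (by linarith [ht.1])
        have has : a ∈ sset := hδsub ⟨Metric.mem_ball_self hδ₀, mem_Ici.2 ha⟩
        have hd := hKlip.dist_le_mul t hts a has
        rw [Real.dist_eq, Real.dist_eq, hφa] at hd
        have h1 : φ t - 0 ≤ |φ t - 0| := le_abs_self _
        have h2 : |t - a| = t - a := abs_of_nonneg (by linarith [ht.1])
        rw [h2] at hd
        have hK₀K : (K₀ : ℝ) * (t - a) ≤ K * (t - a) :=
          mul_le_mul_of_nonneg_right (by simp [hKdef]) (by linarith [ht.1])
        calc φ t = φ t - 0 := by ring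
          _ ≤ |φ t - 0| := h1
          _ ≤ (K₀ : ℝ) * (t - a) := hd
          _ ≤ K * (t - a) := hK₀K
      set X : ℝ := K * ρ^2 / (2*m) with hXdef
      have hev1 : ∀ᶠ b' in 𝓝[Ici (0:ℝ)] a, b' < a + δ * Real.exp (-X) :=
        mem_nhdsWithin_of_mem_nhds (Iio_mem_nhds
          (by nlinarith [Real.exp_pos (-X)]))
      filter_upwards [hev1, self_mem_nhdsWithin] with b' hb1 hb2
      have hb2' : (0:ℝ) ≤ b' := hb2
      rcases le_or_gt b' a with hba' | hab'
      · have hφb' : φ b' = 0 :=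
          le_antisymm (by
            have := hφmono (mem_Ici.2 hb2') (mem_Ici.2 ha) hba'
            rw [hφa] at this
            exact this) (hφnonneg b' hb2')
        rw [maxRadius_top_of_phi_zero h hb2' hφb']
        exact lt_of_le_of_ne le_top hcne
      · have hX0 : (0:ℝ) < Real.exp X := Real.exp_pos _
        have hsmall : (b' - a) * Real.exp X ≤ δ := by
          have h5 : (b' - a) * Real.exp X ≤ (δ * Real.exp (-X)) * Real.exp X :=
            mul_le_mul_of_nonneg_right (by linarith) hX0.le
          have h6 : (δ * Real.exp (-X)) * Real.exp X = δ := by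
            rw [mul_assoc, ← Real.exp_add]
            simp
          linarith
        obtain ⟨v, hv⟩ := exists_sol_exp h ha hδpos hK hlin hab' hρpos hsmall
        exact lt_of_lt_of_le hcρ (le_maxRadius h (ENNReal.ofReal_pos.2 hρpos) ⟨v, hv⟩)
    · -- case φ a > 0 : shift the solution at a
      have hφa' : 0 < φ a := lt_of_le_of_ne (hφnonneg a ha) (Ne.symm hφa)
      obtain ⟨d, hcd, hdR⟩ := exists_between hcR
      obtain ⟨e, hde, heR⟩ := exists_between hdR
      have hdne : d ≠ ⊤ := (lt_of_lt_of_le hde le_top).ne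
      have hene : e ≠ ⊤ := (lt_of_lt_of_le heR le_top).ne
      set ρ : ℝ := d.toReal with hρdef
      set r2 : ℝ := e.toReal - d.toReal with hr2def
      have hr2pos : 0 < r2 := sub_pos.2 (ENNReal.toReal_strict_mono hene hde)
      have hρpos : 0 < ρ := by
        have hd0 : d ≠ 0 := by
          intro hd0
          rw [hd0] at hcd
          exact absurd hcd (by simp)
        exact ENNReal.toReal_pos hd0 hdne
      have hcρ : c < ENNReal.ofReal ρ := by
        rw [hρdef, ENNReal.ofReal_toReal hdne]
        exact hcd
      have hr2R : ENNReal.ofReal r2 < R := by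
        have h1 : r2 ≤ e.toReal := by
          rw [hr2def]
          have : (0:ℝ) ≤ d.toReal := ENNReal.toReal_nonneg
          linarith
        calc ENNReal.ofReal r2 ≤ ENNReal.ofReal e.toReal := ENNReal.ofReal_le_ofReal h1
          _ = e := ENNReal.ofReal_toReal hene
          _ < R := heR
      set κ : ℝ := φ a / m * (r2^2/2) with hκdef
      have hκpos : 0 < κ := by
        have := h.hm0
        positivity
      have hev1 : ∀ᶠ b' in 𝓝[Ici (0:ℝ)] a, b' < a + κ :=
        mem_nhdsWithin_of_mem_nhds (Iio_mem_nhds (by linarith))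
      filter_upwards [hev1, self_mem_nhdsWithin] with b' hb1 hb2
      have hb2' : (0:ℝ) ≤ b' := hb2
      have hur2 : a + κ ≤ u r2 := by
        rw [hκdef]
        exact sol_lower h hRpos hu hr2pos.le hr2R
      have hb'u : b' ≤ u r2 := by linarith
      have hρR : ∀ r : ℝ, 0 ≤ r → ENNReal.ofReal r < ENNReal.ofReal ρ →
          ENNReal.ofReal (r2 + r) < R := by
        intro r hr hrρ
        have h1 : r < ρ := (ENNReal.ofReal_lt_ofReal_iff hρpos).1 hrρ
        have h2 : r2 + r < e.toReal := by
          rw [hr2def] at *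
          rw [hρdef] at h1
          linarith
        calc ENNReal.ofReal (r2 + r) ≤ ENNReal.ofReal e.toReal := ENNReal.ofReal_le_ofReal h2.le
          _ = e := ENNReal.ofReal_toReal hene
          _ < R := heR
      obtain ⟨v, hv⟩ := exists_sol_shift h hRpos hu hr2pos.le hr2R hb2' hb'u
        (ENNReal.ofReal_pos.2 hρpos) hρR
      exact lt_of_lt_of_le hcρ (le_maxRadius h (ENNReal.ofReal_pos.2 hρpos) ⟨v, hv⟩)
  · -- upper semicontinuity
    intro c hc
    have hφa' : 0 < φ a := by
      rcases lt_or_eq_of_le (hφnonneg a ha) with h1 | h1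
      · exact h1
      · exfalso
        rw [maxRadius_top_of_phi_zero h ha h1.symm] at hc
        exact absurd hc not_top_lt
    have hRane : maxRadius m φ a ≠ ⊤ := (lt_of_lt_of_le hc le_top).ne
    obtain ⟨d, hRad, hdc⟩ := exists_between hc
    have hdne : d ≠ ⊤ := (lt_of_lt_of_le hdc le_top).ne
    set ε : ℝ := (d - maxRadius m φ a).toReal with hεdef
    have hεpos : 0 < ε := by
      apply ENNReal.toReal_pos
      · rw [ne_eq, tsub_eq_zero_iff_le]
        exact not_le.2 hRad
      · exact ENNReal.sub_ne_top hdne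
    have hsum : maxRadius m φ a + ENNReal.ofReal ε = d := by
      rw [hεdef, ENNReal.ofReal_toReal (ENNReal.sub_ne_top hdne)]
      exact add_tsub_cancel_of_le hRad.le
    set η : ℝ := (φ a / 2) / m * (ε^2/2) with hηdef
    have hηpos : 0 < η := by
      have := h.hm0
      positivity
    have hev1 : ∀ᶠ b' in 𝓝[Ici (0:ℝ)] a, a - η < b' :=
      mem_nhdsWithin_of_mem_nhds (Ioi_mem_nhds (by linarith))
    have hev2 : ∀ᶠ b' in 𝓝[Ici (0:ℝ)] a, φ a / 2 < φ b' := by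
      have h1 : ContinuousWithinAt φ (Ici 0) a := h.contOn a (mem_Ici.2 ha)
      exact h1.tendsto.eventually (eventually_gt_nhds (by linarith))
    filter_upwards [hev1, hev2, self_mem_nhdsWithin] with b' hb1 hb2 hb3
    have hb3' : (0:ℝ) ≤ b' := hb3
    rcases le_or_gt a b' with hab' | hba'
    · exact lt_of_le_of_lt (maxRadius_antitone h ha hab') hc
    · -- b' < a
      apply lt_of_le_of_lt _ hdc
      rw [← hsum]
      apply sSup_le
      rintro R' ⟨hR'pos, u, hu⟩
      by_contra hgt
      push_neg at hgt
      obtain ⟨y, hy1, hy2⟩ := exists_between hgt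
      have hyne : y ≠ ⊤ := (lt_of_lt_of_le hy2 le_top).ne
      have hεR' : ENNReal.ofReal ε < R' := by
        calc ENNReal.ofReal ε ≤ maxRadius m φ a + ENNReal.ofReal ε := le_add_self
          _ < y := hy1
          _ < R' := hy2
      -- the solution with data b' reaches the value a at radius ε
      have hta : a ≤ u ε := by
        have hlow := sol_lower h hR'pos hu hεpos.le hεR'
        have e1 : φ a / 2 / m * (ε^2/2) ≤ φ b' / m * (ε^2/2) := by
          apply mul_le_mul_of_nonneg_right _ (by positivity)
          exact (div_le_div_iff_of_pos_right h.hm0).2 hb2.le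
        rw [hηdef] at hb1
        linarith
      have hyε : ε < y.toReal := by
        have h1 : ENNReal.ofReal ε < y := lt_of_le_of_lt le_add_self hy1
        exact (ENNReal.ofReal_lt_iff_lt_toReal hεpos.le hyne).1 h1
      have hsub : 0 < y.toReal - ε := by linarith
      have hρR : ∀ r : ℝ, 0 ≤ r → ENNReal.ofReal r < ENNReal.ofReal (y.toReal - ε) →
          ENNReal.ofReal (ε + r) < R' := by
        intro r hr hrρ
        have h1 : r < y.toReal - ε := (ENNReal.ofReal_lt_ofReal_iff hsub).1 hrρ
        have h2 : ε + r < y.toReal := by linarith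
        calc ENNReal.ofReal (ε + r) < ENNReal.ofReal y.toReal :=
              (ENNReal.ofReal_lt_ofReal_iff (by linarith [hεpos] : 0 < y.toReal)).2 h2
          _ = y := ENNReal.ofReal_toReal hyne
          _ < R' := hy2
      obtain ⟨v, hv⟩ := exists_sol_shift h hR'pos hu hεpos.le hεR' ha hta
        (ENNReal.ofReal_pos.2 hsub) hρR
      have hle : ENNReal.ofReal (y.toReal - ε) ≤ maxRadius m φ a :=
        le_maxRadius h (ENNReal.ofReal_pos.2 hsub) ⟨v, hv⟩
      have hcontr : y ≤ maxRadius m φ a + ENNReal.ofReal ε := by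
        rw [← ENNReal.ofReal_toReal hyne, show y.toReal = (y.toReal - ε) + ε by ring,
          ENNReal.ofReal_add hsub.le hεpos.le]
        exact add_le_add_left hle _
      exact absurd hcontr (not_le.2 hy1)
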